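/- Let δ^n (n ≥ 2) be finite-support coefficient functions with ord(δ^n) = n−1, and let 𝓔 be the ascendingly-ordered collection determined by {δ^n : n ≥ 2}. Then 𝓔 is a Zeckendorf collection for positive integers, the immediate predecessor of β^n in 𝓔 equals δ^n for every n ≥ 2, and 𝓔 is the only Zeckendorf collection for positive integers in which the immediate predecessor of β^n equals δ^n for every n ≥ 2. -/

import Mathlib

/-- The `i`-th basis coefficient function `β^i`. -/
def beta (i : ℕ) : ℕ → ℕ := fun k => if k = i then 1 else 0

/-- A coefficient function has finite support. -/
def FinSupp (ε : ℕ → ℕ) : Prop := (Function.support ε).Finite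

/-- The ascending lexicographical order `μ <_a ν` on finite-support coefficient
functions: there is a (necessarily largest) index `k` with `μ k < ν k` and
`μ j = ν j` for all `j > k`. -/
def AscLt (μ ν : ℕ → ℕ) : Prop := ∃ k, μ k < ν k ∧ ∀ j, k < j → μ j = ν j

/-- An ascendingly-ordered collection of coefficient functions: a set of
finite-support coefficient functions on the indices `{1,2,...}` (so vanishing
at the dummy index `0`) containing the zero function and every `β^i`. -/
def IsCollection (E : Set (ℕ → ℕ)) : Prop :=
  (∀ ε ∈ E, ε 0 = 0 ∧ FinSupp ε) ∧ (0 : ℕ → ℕ) ∈ E ∧ ∀ i, 1 ≤ i → beta i ∈ E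

/-- `ν` is the immediate successor of `μ` in `E`. -/
def IsImmSucc (E : Set (ℕ → ℕ)) (μ ν : ℕ → ℕ) : Prop :=
  ν ∈ E ∧ AscLt μ ν ∧ ∀ σ ∈ E, AscLt μ σ → σ = ν ∨ AscLt ν σ

/-- `ν` is the immediate predecessor of `μ` in `E`. -/
def IsImmPred (E : Set (ℕ → ℕ)) (μ ν : ℕ → ℕ) : Prop :=
  ν ∈ E ∧ AscLt ν μ ∧ ∀ σ ∈ E, AscLt σ μ → σ = ν ∨ AscLt σ ν

/-- A Zeckendorf collection for positive integers. -/
def IsZeckendorf (E : Set (ℕ → ℕ)) : Prop :=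
  IsCollection E ∧
  (∀ μ ∈ E, {σ | σ ∈ E ∧ AscLt σ μ}.Finite) ∧
  ∀ μ ∈ E, ∃ ν, IsImmSucc E μ ν ∧
    ((ν = fun k => beta 1 k + μ k) ∨
      ∃ n, 2 ≤ n ∧ ∃ δ, IsImmPred E (beta n) δ ∧
        (∀ j, 1 ≤ j → j < n → μ j = δ j) ∧
        (ν = fun k => beta n k + if n ≤ k then μ k else 0))

/-- `ζ` is a proper `d`-block at index `n` with support `[i, n]` (relative to a
family `d` playing the role of the immediate predecessors `β̂^{n+1}`):
either `ζ` is the zero function (a proper block at any index `n ≥ 1`, with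
support `[n,n]`), or `1 ≤ i ≤ n`, `ζ i < d (n+1) i`, `ζ` agrees with `d (n+1)`
on the indices in `(i, n]`, and `ζ` vanishes outside `[i, n]`. -/
def IsProperBlockAt (d : ℕ → ℕ → ℕ) (ζ : ℕ → ℕ) (i n : ℕ) : Prop :=
  ((∀ k, ζ k = 0) ∧ i = n ∧ 1 ≤ n) ∨
    (1 ≤ i ∧ i ≤ n ∧ ζ i < d (n + 1) i ∧
      (∀ j, i < j → j ≤ n → ζ j = d (n + 1) j) ∧
      ∀ s, s < i ∨ n < s → ζ s = 0)

/-- `ζ` is the maximal `d`-block at index `n` (with support `[1, n]`),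
namely `ζ = d (n+1)`. -/
def IsMaxBlockAt (d : ℕ → ℕ → ℕ) (ζ : ℕ → ℕ) (n : ℕ) : Prop :=
  1 ≤ n ∧ ζ = d (n + 1)

/-- `μ = Σ_{m=1}^M ζ m` is a `d`-block decomposition: `ζ 1` is a `d`-block
(proper or maximal) with support `[i 1, n 1]` where `i 1 = 1`, each `ζ m` with
`2 ≤ m ≤ M` is a proper `d`-block with support `[i m, n m]`, and the supports
are consecutive: `i (m+1) = n m + 1`. -/
def IsBlockDecomp (d : ℕ → ℕ → ℕ) (μ : ℕ → ℕ) (M : ℕ)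
    (ζ : ℕ → ℕ → ℕ) (i n : ℕ → ℕ) : Prop :=
  1 ≤ M ∧ i 1 = 1 ∧
  (IsProperBlockAt d (ζ 1) (i 1) (n 1) ∨ IsMaxBlockAt d (ζ 1) (n 1)) ∧
  (∀ m, 2 ≤ m → m ≤ M → IsProperBlockAt d (ζ m) (i m) (n m)) ∧
  (∀ m, 1 ≤ m → m < M → i (m + 1) = n m + 1) ∧
  ∀ k, μ k = ∑ m ∈ Finset.Icc 1 M, ζ m k

/-- The ascendingly-ordered collection determined by the family `d`, i.e. the
set of all sums of `d`-block decompositions. -/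
def DeterminedCollection (d : ℕ → ℕ → ℕ) : Set (ℕ → ℕ) :=
  {μ | ∃ M ζ i n, IsBlockDecomp d μ M ζ i n}


namespace ZCP

open Finset

/-! ### Basic order lemmas -/

lemma beta_self (i : ℕ) : beta i i = 1 := if_pos rfl

lemma beta_ne {i k : ℕ} (h : k ≠ i) : beta i k = 0 := if_neg h

lemma finsupp_bdd {μ : ℕ → ℕ} (h : FinSupp μ) : ∃ B, ∀ j, B < j → μ j = 0 := by
  obtain ⟨B, hB⟩ := h.bddAbove
  refine ⟨B, fun j hj => ?_⟩
  by_contra hne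
  have : j ∈ Function.support μ := by simpa [Function.mem_support] using hne
  exact absurd (hB this) (by omega)

/-- greatest disagreement index -/
lemma exists_max_diff {μ ν : ℕ → ℕ} (hμ : FinSupp μ) (hν : FinSupp ν) (hne : μ ≠ ν) :
    ∃ k, μ k ≠ ν k ∧ ∀ j, k < j → μ j = ν j := by
  obtain ⟨B1, h1⟩ := finsupp_bdd hμ
  obtain ⟨B2, h2⟩ := finsupp_bdd hν
  have hw : ∃ m, μ m ≠ ν m := by
    by_contra h; push_neg at h; exact hne (funext h)
  obtain ⟨m, hm⟩ := hw
  have hmB : m ≤ B1 + B2 := by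
    by_contra h
    exact hm (by rw [h1 m (by omega), h2 m (by omega)])
  classical
  set k := Nat.findGreatest (fun k => μ k ≠ ν k) (B1 + B2) with hk
  have hspec : μ k ≠ ν k := Nat.findGreatest_spec (P := fun k => μ k ≠ ν k) hmB hm
  refine ⟨k, hspec, fun j hj => ?_⟩
  by_cases hjB : j ≤ B1 + B2
  · by_contra hne'
    exact (Nat.findGreatest_is_greatest hj hjB) hne'
  · rw [h1 j (by omega), h2 j (by omega)]

lemma asc_trichotomy {μ ν : ℕ → ℕ} (hμ : FinSupp μ) (hν : FinSupp ν) :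
    μ = ν ∨ AscLt μ ν ∨ AscLt ν μ := by
  by_cases he : μ = ν
  · exact Or.inl he
  · obtain ⟨k, hk, hab⟩ := exists_max_diff hμ hν he
    rcases Nat.lt_or_ge (μ k) (ν k) with h | h
    · exact Or.inr (Or.inl ⟨k, h, hab⟩)
    · have : ν k < μ k := by omega
      exact Or.inr (Or.inr ⟨k, this, fun j hj => (hab j hj).symm⟩)

lemma asc_asymm {μ ν : ℕ → ℕ} (h1 : AscLt μ ν) (h2 : AscLt ν μ) : False := by
  obtain ⟨k1, hk1, ha1⟩ := h1
  obtain ⟨k2, hk2, ha2⟩ := h2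
  rcases lt_trichotomy k1 k2 with h | h | h
  · have := ha1 k2 h; omega
  · subst h; omega
  · have := ha2 k1 h; omega

lemma asc_irrefl {μ : ℕ → ℕ} (h : AscLt μ μ) : False := by
  obtain ⟨k, hk, _⟩ := h; omega

lemma asc_trans {μ ν σ : ℕ → ℕ} (h1 : AscLt μ ν) (h2 : AscLt ν σ) : AscLt μ σ := by
  obtain ⟨k1, hk1, ha1⟩ := h1
  obtain ⟨k2, hk2, ha2⟩ := h2
  rcases lt_trichotomy k1 k2 with h | h | h
  · exact ⟨k2, by have := ha1 k2 h; omega, fun j hj => (ha1 j (by omega)).trans (ha2 j hj)⟩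
  · subst h; exact ⟨k1, by omega, fun j hj => (ha1 j hj).trans (ha2 j hj)⟩
  · exact ⟨k1, by have := ha2 k1 h; omega, fun j hj => (ha1 j hj).trans (ha2 j (by omega))⟩

lemma asc_lt_beta_iff {σ : ℕ → ℕ} {n : ℕ} (hn : 1 ≤ n) :
    AscLt σ (beta n) ↔ ∀ j, n ≤ j → σ j = 0 := by
  constructor
  · rintro ⟨k, hk, hab⟩
    have hkn : k = n := by
      by_contra h
      rw [beta_ne h] at hk; omega
    subst hkn
    intro j hj
    rcases eq_or_lt_of_le hj with h | h
    · rw [← h]; rw [beta_self] at hk; omega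
    · rw [hab j h, beta_ne (by omega)]
  · intro h
    refine ⟨n, by rw [beta_self, h n le_rfl]; omega, fun j hj => ?_⟩
    rw [h j hj.le, beta_ne (by omega)]

lemma asc_zero_lt {σ : ℕ → ℕ} (hs : FinSupp σ) (h : σ ≠ 0) : AscLt 0 σ := by
  have h0 : FinSupp (0 : ℕ → ℕ) := by
    simp [FinSupp, Function.support]
  obtain ⟨k, hk, hab⟩ := exists_max_diff h0 hs (fun he => h he.symm)
  exact ⟨k, by simpa using Nat.pos_of_ne_zero fun hh => hk (by simp [hh]), hab⟩

lemma asc_not_lt_zero {σ : ℕ → ℕ} (h : AscLt σ 0) : False := by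
  obtain ⟨k, hk, _⟩ := h; simp at hk

/-! ### the bump `cand` -/

/-- bump at `q`: zero out below `q`, increment at `q`. -/
def cand (μ : ℕ → ℕ) (q : ℕ) : ℕ → ℕ := fun k => beta q k + if q ≤ k then μ k else 0

lemma cand_lt {μ : ℕ → ℕ} {q k : ℕ} (h : k < q) : cand μ q k = 0 := by
  simp [cand, beta_ne (by omega : k ≠ q), if_neg (by omega : ¬ q ≤ k)]

lemma cand_self (μ : ℕ → ℕ) (q : ℕ) : cand μ q q = μ q + 1 := by
  simp [cand, beta_self]; omega

lemma cand_gt {μ : ℕ → ℕ} {q k : ℕ} (h : q < k) : cand μ q k = μ k := by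
  simp [cand, beta_ne (by omega : k ≠ q), if_pos (by omega : q ≤ k)]

lemma asc_lt_cand (μ : ℕ → ℕ) (q : ℕ) : AscLt μ (cand μ q) := by
  refine ⟨q, by rw [cand_self]; omega, fun j hj => (cand_gt hj).symm⟩

lemma cand_ne {μ : ℕ → ℕ} {a b : ℕ} (hab : a < b) : cand μ a ≠ cand μ b := by
  intro h
  have := congrFun h b
  rw [cand_gt hab, cand_self] at this; omega

end ZCP
namespace ZCP

open Finset

section Chains

variable (d : ℕ → ℕ → ℕ)

/-- a proper block of `μ` occupying positions `[i, p]`. -/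
def Blk (μ : ℕ → ℕ) (i p : ℕ) : Prop :=
  1 ≤ i ∧ i ≤ p ∧ μ i < d (p + 1) i ∧ ∀ j, i < j → j ≤ p → μ j = d (p + 1) j

/-- `Chain μ a p` : the values of `μ` on `(a, p]` form a chain of proper blocks. -/
inductive Chain (μ : ℕ → ℕ) (a : ℕ) : ℕ → Prop
  | nil : Chain μ a a
  | cons (i p : ℕ) : a < i → Blk d μ i p → Chain μ a (i - 1) → Chain μ a p

/-- a maximal block at the bottom: `μ` agrees with `d (m+1)` on `[1, m]`. -/
def MaxLow (μ : ℕ → ℕ) (m : ℕ) : Prop :=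
  1 ≤ m ∧ ∀ j, 1 ≤ j → j ≤ m → μ j = d (m + 1) j

/-- local characterization of membership in the determined collection. -/
def Mem (μ : ℕ → ℕ) : Prop :=
  μ 0 = 0 ∧ ∃ p, (∀ j, p < j → μ j = 0) ∧
    (Chain d μ 0 p ∨ ∃ m, m ≤ p ∧ MaxLow d μ m ∧ Chain d μ m p)

variable {d}
variable (h0 : ∀ n, 2 ≤ n → d n 0 = 0)
  (hord : ∀ n, 2 ≤ n → d n (n - 1) ≠ 0 ∧ ∀ k, n - 1 < k → d n k = 0)

include hord in
lemma dpos {p : ℕ} (hp : 1 ≤ p) : 0 < d (p + 1) p := by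
  have h := (hord (p + 1) (by omega)).1
  have he : p + 1 - 1 = p := by omega
  rw [he] at h
  exact Nat.pos_of_ne_zero h

include hord in
lemma dzero {m k : ℕ} (hm : 1 ≤ m) (hk : m < k) : d (m + 1) k = 0 :=
  (hord (m + 1) (by omega)).2 k (by omega)

lemma chain_le {μ : ℕ → ℕ} {a p : ℕ} (h : Chain d μ a p) : a ≤ p := by
  induction h with
  | nil => exact le_rfl
  | cons i p hi hblk _ _ => exact le_of_lt (lt_of_lt_of_le hi hblk.2.1)

include hord in
lemma chain_zero {μ : ℕ → ℕ} {a p : ℕ} (hap : a ≤ p)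
    (hz : ∀ j, a < j → j ≤ p → μ j = 0) : Chain d μ a p := by
  induction p with
  | zero =>
    have : a = 0 := by omega
    subst this; exact Chain.nil
  | succ p ih =>
    rcases eq_or_lt_of_le hap with h | h
    · subst h; exact Chain.nil
    · have h1 : 1 ≤ p + 1 := by omega
      refine Chain.cons (p + 1) (p + 1) (by omega) ?_ ?_
      · exact ⟨h1, le_rfl, by rw [hz (p+1) (by omega) le_rfl]; exact dpos hord h1,
          fun j h1 h2 => by omega⟩
      · have he : p + 1 - 1 = p := by omega
        rw [he]
        exact ih (by omega) (fun j hj1 hj2 => hz j hj1 (by omega))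

lemma chain_concat {μ : ℕ → ℕ} {a b p : ℕ} (h1 : Chain d μ b p) (h2 : Chain d μ a b) :
    Chain d μ a p := by
  induction h1 with
  | nil => exact h2
  | cons i q hi hblk hch ih =>
    exact Chain.cons i q (lt_of_le_of_lt (chain_le h2) hi) hblk ih

lemma chain_transfer {μ ν : ℕ → ℕ} {a p : ℕ} (h : Chain d μ a p)
    (he : ∀ j, a < j → j ≤ p → ν j = μ j) : Chain d ν a p := by
  induction h with
  | nil => exact Chain.nil
  | cons i q hi hblk hch ih =>
    refine Chain.cons i q hi ?_ (ih fun j h1 h2 => he j h1 (by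
      have := hblk.2.1; omega))
    obtain ⟨b1, b2, b3, b4⟩ := hblk
    exact ⟨b1, b2, by rw [he i hi b2]; exact b3,
      fun j hj1 hj2 => by rw [he j (by omega) hj2]; exact b4 j hj1 hj2⟩

include hord in
lemma chain_pad {μ : ℕ → ℕ} {a p P : ℕ} (h : Chain d μ a p) (hpP : p ≤ P)
    (hz : ∀ j, p < j → μ j = 0) : Chain d μ a P :=
  chain_concat (chain_zero hord hpP (fun j h1 _ => hz j h1)) h

include hord in
lemma chain_strip_core {μ : ℕ → ℕ} {a p P : ℕ} (h : Chain d μ a p)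
    (hz : ∀ j, P < j → μ j = 0) (haP : a ≤ P) (hPp : P ≤ p) : Chain d μ a P := by
  induction h with
  | nil => have : a = P := by omega
           subst this; exact Chain.nil
  | cons i q hi hblk hch ih =>
    rcases eq_or_lt_of_le hPp with h | h
    · subst h; exact Chain.cons _ _ hi hblk hch
    · obtain ⟨b1, b2, b3, b4⟩ := hblk
      rcases eq_or_lt_of_le b2 with hip | hip
      · subst hip
        exact ih (by omega)
      · exfalso
        have hv : μ q = d (q + 1) q := b4 q hip le_rfl
        have hz' : μ q = 0 := hz q (by omega)
        have := dpos hord (show 1 ≤ q by omega)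
        omega

include hord in
lemma chain_adjust {μ : ℕ → ℕ} {a p P : ℕ} (h : Chain d μ a p)
    (hzP : ∀ j, P < j → μ j = 0) (hzp : ∀ j, p < j → μ j = 0) (haP : a ≤ P) :
    Chain d μ a P := by
  rcases le_total P p with hle | hle
  · exact chain_strip_core hord h hzP haP hle
  · exact chain_pad hord h hle hzp

lemma blk_det {μ : ℕ → ℕ} {i i' p : ℕ} (h : Blk d μ i p) (h' : Blk d μ i' p) : i = i' := by
  by_contra hne
  rcases lt_or_gt_of_ne hne with hlt | hlt
  · have := h.2.2.2 i' hlt h'.2.1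
    have := h'.2.2.1
    omega
  · have := h'.2.2.2 i hlt h.2.1
    have := h.2.2.1
    omega

lemma chain_inv {μ : ℕ → ℕ} {a p : ℕ} (h : Chain d μ a p) :
    a = p ∨ ∃ i, a < i ∧ Blk d μ i p ∧ Chain d μ a (i - 1) := by
  cases h with
  | nil => exact Or.inl rfl
  | cons i p hi hblk hch => exact Or.inr ⟨i, hi, hblk, hch⟩

lemma chain_split {μ : ℕ → ℕ} {p : ℕ} :
    ∀ {a b : ℕ}, Chain d μ a p → Chain d μ b p → a ≤ b → Chain d μ a b := by
  induction p using Nat.strong_induction_on with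
  | _ p ih =>
    intro a b h1 h2 hab
    by_cases hbp : b = p
    · subst hbp; exact h1
    · rcases chain_inv h2 with h | ⟨i', hi', hblk', hch'⟩
      · exact absurd h hbp
      · rcases chain_inv h1 with h | ⟨i, hi, hblk, hch⟩
        · exfalso
          have := chain_le h2
          omega
        · have hii : i = i' := blk_det hblk hblk'
          subst hii
          have hi1p : i - 1 < p := by
            have := hblk.2.1
            have := hblk.1
            omega
          exact ih (i - 1) hi1p hch hch' hab

lemma chain_bot {μ : ℕ → ℕ} {a p : ℕ} (h : Chain d μ a p) :
    a = p ∨ ∃ nb, a < nb ∧ nb ≤ p ∧ Blk d μ (a + 1) nb ∧ Chain d μ nb p := by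
  induction h with
  | nil => exact Or.inl rfl
  | cons i p hi hblk ih =>
    rename_i hch
    rcases hch with h | ⟨nb, h1, h2, hblk', hch'⟩
    · -- a = i - 1, so i = a + 1, bottom block is [i, p]
      have hia : i = a + 1 := by
        have := hblk.1; omega
      subst hia
      refine Or.inr ⟨p, ?_, le_rfl, hblk, Chain.nil⟩
      have := hblk.2.1; omega
    · refine Or.inr ⟨nb, h1, le_trans h2 (le_trans (by omega) hblk.2.1), hblk', ?_⟩
      exact Chain.cons i p (by have := hblk.1; omega) hblk hch'

lemma chain_loc {μ : ℕ → ℕ} {a p q : ℕ} (h : Chain d μ a p) (haq : a < q) (hqp : q ≤ p) :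
    ∃ i nb, a < i ∧ i ≤ q ∧ q ≤ nb ∧ nb ≤ p ∧ Blk d μ i nb ∧ Chain d μ nb p ∧
      Chain d μ a (i - 1) := by
  induction h with
  | nil => omega
  | cons i p hi hblk ih =>
    rename_i hch
    by_cases hiq : i ≤ q
    · exact ⟨i, p, hi, hiq, hqp, le_rfl, hblk, Chain.nil, ih⟩
    · have hq : q ≤ i - 1 := by omega
      obtain ⟨i0, nb0, h1, h2, h3, h4, hblk0, hchtop, hchlow⟩ := hch hq
      refine ⟨i0, nb0, h1, h2, h3, le_trans h4 (le_trans (by have := hblk.1; omega) hblk.2.1),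
        hblk0, ?_, hchlow⟩
      exact Chain.cons i p (by have := hblk.1; omega) hblk hchtop

end Chains

end ZCP
namespace ZCP

open Finset

section MemBasics

variable {d : ℕ → ℕ → ℕ}
variable (h0 : ∀ n, 2 ≤ n → d n 0 = 0)
  (hord : ∀ n, 2 ≤ n → d n (n - 1) ≠ 0 ∧ ∀ k, n - 1 < k → d n k = 0)

lemma mem_finsupp {μ : ℕ → ℕ} (h : Mem d μ) : FinSupp μ := by
  obtain ⟨-, p, hz, -⟩ := h
  refine Set.Finite.subset (Set.finite_Icc 0 p) ?_
  intro x hx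
  simp only [Function.mem_support] at hx
  simp only [Set.mem_Icc]
  constructor
  · omega
  · by_contra h
    exact hx (hz x (by omega))

lemma mem_zero_at_zero {μ : ℕ → ℕ} (h : Mem d μ) : μ 0 = 0 := h.1

lemma mem_zero : Mem d 0 := ⟨rfl, 0, fun _ _ => rfl, Or.inl Chain.nil⟩

include h0 hord in
lemma mem_dn {n : ℕ} (hn : 2 ≤ n) : Mem d (d n) := by
  refine ⟨h0 n hn, n - 1, ?_, Or.inr ⟨n - 1, le_rfl, ⟨by omega, ?_⟩, Chain.nil⟩⟩
  · intro j hj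
    exact (hord n hn).2 j hj
  · intro j h1 h2
    congr 2
    omega

/-- index of the last nonzero entry of `d n` below bound `s` (0 if none). -/
def lastNZ (d : ℕ → ℕ → ℕ) (n s : ℕ) : ℕ :=
  Nat.findGreatest (fun j => 0 < j ∧ d n j ≠ 0) s

lemma lastNZ_le (n s : ℕ) : lastNZ d n s ≤ s := by
  unfold lastNZ
  exact Nat.findGreatest_le s

lemma lastNZ_zero {n s : ℕ} (h : lastNZ d n s = 0) :
    ∀ j, 0 < j → j ≤ s → d n j = 0 := by
  unfold lastNZ at h
  intro j h1 h2
  by_contra hne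
  exact (Nat.findGreatest_eq_zero_iff.1 h h1 h2) ⟨h1, hne⟩

lemma lastNZ_pos_spec {n s : ℕ} (h : lastNZ d n s ≠ 0) :
    0 < lastNZ d n s ∧ d n (lastNZ d n s) ≠ 0 ∧
      ∀ j, lastNZ d n s < j → j ≤ s → d n j = 0 := by
  unfold lastNZ at *
  have hs := Nat.findGreatest_of_ne_zero rfl h
  refine ⟨hs.1, hs.2, fun j h1 h2 => ?_⟩
  by_contra hne
  exact (Nat.findGreatest_is_greatest h1 h2) ⟨by omega, hne⟩

include hord in
lemma mem_beta {i : ℕ} (hi : 1 ≤ i) : Mem d (beta i) := by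
  have hzero : ∀ j, i < j → beta i j = 0 := fun j hj => beta_ne (by omega)
  have hdi : 0 < d (i + 1) i := dpos hord hi
  rcases Nat.lt_or_ge 1 (d (i + 1) i) with hgt | hle
  · -- singleton block [i,i]
    refine ⟨beta_ne (by omega), i, hzero, Or.inl ?_⟩
    refine Chain.cons i i (by omega) ⟨hi, le_rfl, by rw [beta_self]; omega, fun j h1 h2 => by omega⟩ ?_
    exact chain_zero hord (by omega) (fun j h1 h2 => beta_ne (by omega))
  · have hone : d (i + 1) i = 1 := by omega
    by_cases hz : lastNZ d (i + 1) (i - 1) = 0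
    · -- maximal form
      refine ⟨beta_ne (by omega), i, hzero, Or.inr ⟨i, le_rfl, ⟨hi, ?_⟩, Chain.nil⟩⟩
      intro j h1 h2
      rcases eq_or_lt_of_le h2 with h | h
      · rw [h, beta_self, hone]
      · rw [beta_ne (by omega), (lastNZ_zero hz j h1 (by omega)).symm]
    · obtain ⟨hp, hnz, hzab⟩ := lastNZ_pos_spec hz
      have hj0i : lastNZ d (i + 1) (i - 1) ≤ i - 1 := lastNZ_le _ _
      refine ⟨beta_ne (by omega), i, hzero, Or.inl ?_⟩
      refine Chain.cons (lastNZ d (i + 1) (i - 1)) i (by omega)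
        ⟨by omega, by omega, ?_, ?_⟩ ?_
      · rw [beta_ne (by omega)]; omega
      · intro j h1 h2
        rcases eq_or_lt_of_le h2 with h | h
        · rw [h, beta_self, hone]
        · rw [beta_ne (by omega), hzab j h1 (by omega)]
      · exact chain_zero hord (by omega) (fun j h1 h2 => beta_ne (by omega))

include h0 hord in
/-- Every member supported strictly below `n` is `≤ d n`  (L1). -/
lemma mem_below_dn {σ : ℕ → ℕ} {n : ℕ} (hσ : Mem d σ) (hn : 2 ≤ n)
    (hz : ∀ j, n ≤ j → σ j = 0) : σ = d n ∨ AscLt σ (d n) := by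
  obtain ⟨hσ0, p, hzp, hstr⟩ := hσ
  have hzn : ∀ j, n - 1 < j → σ j = 0 := fun j hj => hz j (by omega)
  have hn1 : n - 1 + 1 = n := by omega
  have habove : ∀ j, n - 1 < j → σ j = d n j := by
    intro j hj
    rw [hzn j hj, (hord n hn).2 j (by omega)]
  have hfromblk : ∀ i, Blk d σ i (n - 1) → AscLt σ (d n) := by
    intro i hblk
    obtain ⟨b1, b2, b3, b4⟩ := hblk
    rw [hn1] at b3
    refine ⟨i, b3, fun j hj => ?_⟩
    by_cases hjn : j ≤ n - 1
    · rw [b4 j hj hjn, hn1]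
    · exact habove j (by omega)
  rcases hstr with hch | ⟨m, hmp, ⟨hm1, hmax⟩, hchm⟩
  · have hch' : Chain d σ 0 (n - 1) := chain_adjust hord hch hzn hzp (by omega)
    rcases chain_inv hch' with h | ⟨i, hi, hblk, -⟩
    · exfalso; omega
    · exact Or.inr (hfromblk i hblk)
  · have hmn : m ≤ n - 1 := by
      by_contra hc
      have h1 : σ m = d (m + 1) m := hmax m (by omega) le_rfl
      have h2 : σ m = 0 := hzn m (by omega)
      have := dpos hord hm1
      omega
    have hch' : Chain d σ m (n - 1) := chain_adjust hord hchm hzn hzp hmn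
    rcases chain_inv hch' with h | ⟨i, hi, hblk, -⟩
    · -- m = n - 1 : σ = d n
      left
      funext j
      rcases Nat.eq_zero_or_pos j with hj | hj
      · rw [hj, hσ0]
        exact (h0 n hn).symm
      · by_cases hjn : j ≤ n - 1
        · rw [hmax j hj (by omega), h, hn1]
        · exact habove j (by omega)
    · exact Or.inr (hfromblk i hblk)

end MemBasics

end ZCP
namespace ZCP

open Finset

section Core

variable {d : ℕ → ℕ → ℕ}
variable (h0 : ∀ n, 2 ≤ n → d n 0 = 0)
  (hord : ∀ n, 2 ≤ n → d n (n - 1) ≠ 0 ∧ ∀ k, n - 1 < k → d n k = 0)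

/-- Lemma U : if the bump of `σ` at a qualifying index is a member, so is `σ`. -/
lemma mem_of_cand_mem {σ : ℕ → ℕ} {q : ℕ} (hσ0 : σ 0 = 0) (hq : 1 ≤ q)
    (hagree : ∀ j, 1 ≤ j → j < q → σ j = d q j)
    (h : Mem d (cand σ q)) : Mem d σ := by
  obtain ⟨-, p, hzp, hstr⟩ := h
  have hqp : q ≤ p := by
    by_contra hc
    have := hzp q (by omega)
    rw [cand_self] at this
    omega
  have hσzp : ∀ j, p < j → σ j = 0 := by
    intro j hj
    have := hzp j hj
    rwa [cand_gt (by omega)] at this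
  have htr : ∀ {a p' : ℕ}, q ≤ a → Chain d (cand σ q) a p' → Chain d σ a p' := by
    intro a p' hqa hc
    exact chain_transfer hc (fun j h1 h2 => (cand_gt (by omega)).symm)
  -- from a block of `cand σ q` containing `q`, a block of `σ` starting at `q`
  have key : ∀ i nb, i ≤ q → q ≤ nb → Blk d (cand σ q) i nb → Blk d σ q nb := by
    intro i nb hiq hqnb hblk
    obtain ⟨b1, b2, b3, b4⟩ := hblk
    have hle : cand σ q q ≤ d (nb + 1) q := by
      rcases eq_or_lt_of_le hiq with h | h
      · rw [h] at b3; exact le_of_lt b3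
      · exact le_of_eq (b4 q h hqnb)
    rw [cand_self] at hle
    refine ⟨hq, hqnb, by omega, fun j h1 h2 => ?_⟩
    have hb := b4 j (by omega) h2
    rwa [cand_gt h1] at hb
  rcases eq_or_lt_of_le hq with hq1 | hq2
  · -- q = 1
    subst hq1
    refine ⟨hσ0, p, hσzp, Or.inl ?_⟩
    rcases hstr with hch | ⟨m, hmp, ⟨hm1, hmax⟩, chm⟩
    · rcases chain_bot hch with h | ⟨nb, h1, h2, hblk, chtop⟩
      · omega
      · have blkσ : Blk d σ 1 nb := key 1 nb le_rfl (by omega) hblk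
        exact chain_concat (htr (by omega) chtop) (Chain.cons 1 nb (by omega) blkσ Chain.nil)
    · have hd1 : cand σ 1 1 = d (m + 1) 1 := hmax 1 le_rfl hm1
      rw [cand_self] at hd1
      have blkσ : Blk d σ 1 m := by
        refine ⟨le_rfl, hm1, by omega, fun j h1 h2 => ?_⟩
        have hb := hmax j (by omega) h2
        rwa [cand_gt h1] at hb
      exact chain_concat (htr hm1 chm) (Chain.cons 1 m (by omega) blkσ Chain.nil)
  · -- q ≥ 2 : maximal form with bottom block d q on [1, q-1]
    have hml : MaxLow d σ (q - 1) := by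
      refine ⟨by omega, fun j h1 h2 => ?_⟩
      have : q - 1 + 1 = q := by omega
      rw [this]
      exact hagree j h1 (by omega)
    have hmain : ∃ nb, q ≤ nb ∧ nb ≤ p ∧ Blk d σ q nb ∧ Chain d σ nb p := by
      rcases hstr with hch | ⟨m, hmp, ⟨hm1, hmax⟩, chm⟩
      · obtain ⟨i, nb, hi0, hiq, hqnb, hnbp, hblk, chtop, -⟩ := chain_loc hch (by omega) hqp
        exact ⟨nb, hqnb, hnbp, key i nb hiq hqnb hblk, htr hqnb chtop⟩
      · by_cases hqm : q ≤ m
        · have hdq : cand σ q q = d (m + 1) q := hmax q (by omega) hqm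
          rw [cand_self] at hdq
          refine ⟨m, hqm, hmp, ⟨by omega, hqm, by omega, fun j h1 h2 => ?_⟩, htr hqm chm⟩
          have hb := hmax j (by omega) h2
          rwa [cand_gt h1] at hb
        · obtain ⟨i, nb, hi0, hiq, hqnb, hnbp, hblk, chtop, -⟩ :=
            chain_loc chm (by omega) hqp
          exact ⟨nb, hqnb, hnbp, key i nb hiq hqnb hblk, htr hqnb chtop⟩
    obtain ⟨nb, hqnb, hnbp, blkσ, chtop⟩ := hmain
    refine ⟨hσ0, p, hσzp, Or.inr ⟨q - 1, by omega, hml, ?_⟩⟩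
    refine chain_concat chtop (Chain.cons q nb (by omega) blkσ ?_)
    have : q - 1 = q - 1 := rfl
    exact Chain.nil

include hord in
/-- existence and shape of the immediate successor inside the collection. -/
theorem succ_exists {μ : ℕ → ℕ} (hμ : Mem d μ) :
    ∃ K, 1 ≤ K ∧ (K = 1 ∨ (2 ≤ K ∧ ∀ j, 1 ≤ j → j < K → μ j = d K j)) ∧
      Mem d (cand μ K) ∧
      ∀ σ, Mem d σ → AscLt μ σ → σ = cand μ K ∨ AscLt (cand μ K) σ := by
  obtain ⟨hμ0, p, hzp, hstr⟩ := hμ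
  rcases hstr with hch | ⟨m, hmp, ⟨hm1, hmax⟩, chm⟩
  · -- bottom structure is a proper chain : K = 1
    refine ⟨1, le_rfl, Or.inl rfl, ?_, ?_⟩
    · -- membership of the bump
      rcases chain_bot hch with h | ⟨nb, h1, h2, hblk, chtop⟩
      · -- μ = 0
        have hz : ∀ j, (0:ℕ) < j → μ j = 0 := fun j hj => hzp j (by omega)
        have : cand μ 1 = beta 1 := by
          funext k
          rcases Nat.lt_trichotomy k 1 with hk | hk | hk
          · have : k = 0 := by omega
            rw [this, cand_lt (by omega), beta_ne (by omega)]
          · rw [hk, cand_self, beta_self, hz 1 (by omega)]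
          · rw [cand_gt hk, beta_ne (by omega), hz k (by omega)]
        rw [this]
        exact mem_beta hord le_rfl
      · obtain ⟨b1, b2, b3, b4⟩ := hblk
        have hν1 : cand μ 1 1 = μ 1 + 1 := cand_self μ 1
        have hνz : ∀ j, p < j → cand μ 1 j = 0 := by
          intro j hj
          rw [cand_gt (by omega)]
          exact hzp j hj
        have hchtop : Chain d (cand μ 1) nb p :=
          chain_transfer chtop (fun j hj1 hj2 => cand_gt (by omega))
        rcases eq_or_lt_of_le (show μ 1 + 1 ≤ d (nb + 1) 1 from b3) with he | hlt
        · -- becomes the maximal block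
          refine ⟨cand_lt (by omega), p, hνz, Or.inr ⟨nb, h2, ⟨by omega, ?_⟩, hchtop⟩⟩
          intro j hj1 hj2
          rcases eq_or_lt_of_le hj1 with h | h
          · rw [← h, hν1, he]
          · rw [cand_gt h]
            exact b4 j h hj2
        · -- still a proper block
          refine ⟨cand_lt (by omega), p, hνz, Or.inl ?_⟩
          refine chain_concat hchtop (Chain.cons 1 nb (by omega) ⟨le_rfl, b2, ?_, ?_⟩ Chain.nil)
          · rw [hν1]; exact hlt
          · intro j hj1 hj2
            rw [cand_gt hj1]
            exact b4 j hj1 hj2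
    · -- minimality
      intro σ hσ hlt
      obtain ⟨t, ht, hab⟩ := hlt
      have hσ0 := hσ.1
      have ht1 : 1 ≤ t := by
        by_contra hc
        have : t = 0 := by omega
        rw [this, hμ0, hσ0] at ht
        omega
      rcases eq_or_lt_of_le ht1 with h1 | h1
      · -- t = 1
        subst h1
        rcases eq_or_lt_of_le (Nat.succ_le_of_lt ht) with he | hgt
        · left
          funext k
          rcases Nat.lt_trichotomy k 1 with hk | hk | hk
          · have : k = 0 := by omega
            rw [this, hσ0, cand_lt (by omega)]
          · rw [hk, cand_self]
            omega
          · rw [cand_gt hk]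
            exact (hab k (by omega)).symm
        · right
          refine ⟨1, by rw [cand_self]; omega, fun j hj => ?_⟩
          rw [cand_gt hj]
          exact hab j (by omega)
      · right
        refine ⟨t, by rw [cand_gt h1]; exact ht, fun j hj => ?_⟩
        rw [cand_gt (by omega)]
        exact hab j hj
  · -- bottom structure maximal at m : K = m + 1
    refine ⟨m + 1, by omega, Or.inr ⟨by omega, fun j hj1 hj2 => hmax j hj1 (by omega)⟩, ?_, ?_⟩
    · -- membership of the bump
      rcases chain_bot chm with h | ⟨nb, h1, h2, hblk, chtop⟩
      · -- μ vanishes above m : the bump is beta (m+1)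
        have : cand μ (m + 1) = beta (m + 1) := by
          funext k
          rcases Nat.lt_trichotomy k (m + 1) with hk | hk | hk
          · rw [cand_lt hk, beta_ne (by omega)]
          · rw [hk, cand_self, beta_self, hzp (m+1) (by omega)]
          · rw [cand_gt hk, beta_ne (by omega), hzp k (by omega)]
        rw [this]
        exact mem_beta hord (by omega)
      · obtain ⟨b1, b2, b3, b4⟩ := hblk
        have hνs : cand μ (m + 1) (m + 1) = μ (m + 1) + 1 := cand_self μ (m + 1)
        have hνz : ∀ j, p < j → cand μ (m + 1) j = 0 := by
          intro j hj
          rw [cand_gt (by omega)]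
          exact hzp j hj
        have hchtop : Chain d (cand μ (m + 1)) nb p :=
          chain_transfer chtop (fun j hj1 hj2 => cand_gt (by omega))
        rcases eq_or_lt_of_le (show μ (m+1) + 1 ≤ d (nb + 1) (m+1) from b3) with he | hlt
        · -- the bump hits the `d` value : extend downwards or become maximal
          by_cases hz : lastNZ d (nb + 1) m = 0
          · -- maximal block [1, nb]
            refine ⟨cand_lt (by omega), p, hνz, Or.inr ⟨nb, h2, ⟨by omega, ?_⟩, hchtop⟩⟩
            intro j hj1 hj2
            rcases Nat.lt_trichotomy j (m + 1) with hj | hj | hj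
            · rw [cand_lt hj, lastNZ_zero hz j (by omega) (by omega)]
            · rw [hj, hνs, he]
            · rw [cand_gt hj]
              exact b4 j hj hj2
          · obtain ⟨hp0, hnz0, hzab⟩ := lastNZ_pos_spec hz
            have hj0m : lastNZ d (nb + 1) m ≤ m := lastNZ_le _ _
            refine ⟨cand_lt (by omega), p, hνz, Or.inl ?_⟩
            refine chain_concat hchtop (Chain.cons (lastNZ d (nb + 1) m) nb hp0
              ⟨hp0, by omega, ?_, ?_⟩ ?_)
            · rw [cand_lt (by omega)]
              omega
            · intro j hj1 hj2
              rcases Nat.lt_trichotomy j (m + 1) with hj | hj | hj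
              · rw [cand_lt hj, hzab j hj1 (by omega)]
              · rw [hj, hνs, he]
              · rw [cand_gt hj]
                exact b4 j hj hj2
            · exact chain_zero hord (by omega) (fun j hj1 hj2 => cand_lt (by omega))
        · -- still a proper block [m+1, nb]
          refine ⟨cand_lt (by omega), p, hνz, Or.inl ?_⟩
          refine chain_concat hchtop (Chain.cons (m + 1) nb (by omega)
            ⟨by omega, b2, by rw [hνs]; exact hlt, ?_⟩ ?_)
          · intro j hj1 hj2
            rw [cand_gt hj1]
            exact b4 j hj1 hj2
          · exact chain_zero hord (by omega) (fun j hj1 hj2 => cand_lt (by omega))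
    · -- minimality
      intro σ hσ hlt
      obtain ⟨t, ht, hab⟩ := hlt
      obtain ⟨hσ0, pσ, hzσ, strσ⟩ := hσ
      have ht1 : 1 ≤ t := by
        by_contra hc
        have : t = 0 := by omega
        rw [this, hμ0, hσ0] at ht
        omega
      rcases Nat.lt_trichotomy t (m + 1) with htm | htm | htm
      · -- impossible : would break the maximal block
        exfalso
        have htm' : t ≤ m := by omega
        have hσzp : ∀ j, p < j → σ j = 0 := by
          intro j hj
          rw [← hab j (by omega)]
          exact hzp j hj
        have chσm : Chain d σ m p :=
          chain_transfer chm (fun j hj1 hj2 => (hab j (by omega)).symm)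
        have hσt : d (m + 1) t < σ t := by
          rw [← hmax t ht1 htm']
          exact ht
        -- a block of σ ending exactly at m is impossible
        have noblk : ∀ i, Blk d σ i m → False := by
          intro i hblk
          obtain ⟨c1, c2, c3, c4⟩ := hblk
          rcases Nat.lt_trichotomy i t with hit | hit | hit
          · have := c4 t hit htm'
            omega
          · rw [hit] at c3
            omega
          · have h5 := c4
            have h6 : μ i = σ i := hab i hit
            have h7 : μ i = d (m + 1) i := hmax i (by omega) c2
            omega
        rcases strσ with chσ | ⟨mσ, hmσp, ⟨hmσ1, hmaxσ⟩, chσ2⟩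
        · have chσ' : Chain d σ 0 p := chain_adjust hord chσ hσzp hzσ (by omega)
          have hsp : Chain d σ 0 m := chain_split chσ' chσm (by omega)
          rcases chain_inv hsp with h | ⟨i, hi, hblk, -⟩
          · omega
          · exact noblk i hblk
        · have hmσle : mσ ≤ p := by
            by_contra hc
            have h1 : σ mσ = d (mσ + 1) mσ := hmaxσ mσ hmσ1 le_rfl
            have h2 : σ mσ = 0 := hσzp mσ (by omega)
            have := dpos hord hmσ1
            omega
          have chσ' : Chain d σ mσ p := chain_adjust hord chσ2 hσzp hzσ hmσle
          rcases le_total mσ m with hcase | hcase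
          · have hsp : Chain d σ mσ m := chain_split chσ' chσm hcase
            rcases chain_inv hsp with h | ⟨i, hi, hblk, -⟩
            · -- mσ = m : σ t = d (m+1) t, contradiction
              have := hmaxσ t ht1 (by omega)
              rw [h] at this
              omega
            · exact noblk i hblk
          · have hsp : Chain d σ m mσ := chain_split chσm chσ' hcase
            rcases chain_inv hsp with h | ⟨i, hi, hblk, -⟩
            · have := hmaxσ t ht1 (by omega)
              rw [← h] at this
              omega
            · obtain ⟨c1, c2, c3, c4⟩ := hblk
              have := hmaxσ i (by omega) c2
              omega
      · -- t = m + 1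
        subst htm
        rcases eq_or_lt_of_le (Nat.succ_le_of_lt ht) with he | hgt
        · by_cases hzb : ∀ k, 1 ≤ k → k < m + 1 → σ k = 0
          · left
            funext k
            rcases Nat.lt_trichotomy k (m + 1) with hk | hk | hk
            · rcases Nat.eq_zero_or_pos k with h | h
              · rw [h, hσ0, cand_lt (by omega)]
              · rw [cand_lt hk, hzb k h hk]
            · rw [hk, cand_self]
              omega
            · rw [cand_gt hk]
              exact (hab k (by omega)).symm
          · right
            push_neg at hzb
            obtain ⟨k, hk1, hk2, hk3⟩ := hzb
            have hks : k ≤ m := by omega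
            have hw : σ (Nat.findGreatest (fun k => σ k ≠ 0) m) ≠ 0 :=
              Nat.findGreatest_spec (P := fun k => σ k ≠ 0) hks hk3
            have hwle : Nat.findGreatest (fun k => σ k ≠ 0) m ≤ m := Nat.findGreatest_le m
            have hw1 : 1 ≤ Nat.findGreatest (fun k => σ k ≠ 0) m := by
              by_contra hc
              have : Nat.findGreatest (fun k => σ k ≠ 0) m = 0 := by omega
              rw [this, hσ0] at hw
              exact hw rfl
            refine ⟨Nat.findGreatest (fun k => σ k ≠ 0) m, ?_, ?_⟩
            · rw [cand_lt (by omega)]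
              omega
            · intro j hj
              rcases Nat.lt_trichotomy j (m + 1) with hj2 | hj2 | hj2
              · rw [cand_lt hj2]
                by_contra hc
                exact (Nat.findGreatest_is_greatest hj (by omega)) (fun h => hc h.symm)
              · rw [hj2, cand_self]
                omega
              · rw [cand_gt hj2]
                exact hab j (by omega)
        · right
          refine ⟨m + 1, by rw [cand_self]; omega, fun j hj => ?_⟩
          rw [cand_gt hj]
          exact hab j (by omega)
      · right
        refine ⟨t, by rw [cand_gt htm]; exact ht, fun j hj => ?_⟩
        rw [cand_gt (by omega)]
        exact hab j hj

end Core

end ZCP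
namespace ZCP

open Finset

section Equiv

variable {d : ℕ → ℕ → ℕ}
variable (h0 : ∀ n, 2 ≤ n → d n 0 = 0)
  (hord : ∀ n, 2 ≤ n → d n (n - 1) ≠ 0 ∧ ∀ k, n - 1 < k → d n k = 0)

include h0 hord in
lemma det_to_mem {μ : ℕ → ℕ} (h : μ ∈ DeterminedCollection d) : Mem d μ := by
  obtain ⟨M, ζ, idx, n, hM1, hidx1, hblk1, hblks, hcons, hsum⟩ := h
  -- bounds for each block
  have bnds : ∀ m, 1 ≤ m → m ≤ M → 1 ≤ idx m ∧ idx m ≤ n m := by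
    intro m hm1 hmM
    rcases eq_or_lt_of_le hm1 with h | h
    · subst h
      rcases hblk1 with hb | hb
      · rcases hb with ⟨-, hin, h1n⟩ | ⟨hh1, hh2, -⟩
        · omega
        · exact ⟨hh1, hh2⟩
      · have := hb.1
        omega
    · rcases hblks m h hmM with ⟨-, hin, h1n⟩ | ⟨hh1, hh2, -⟩
      · omega
      · exact ⟨hh1, hh2⟩
  have mono : ∀ s t, 1 ≤ s → s ≤ t → t ≤ M → n s ≤ n t := by
    intro s t hs hst htM
    induction t with
    | zero => omega
    | succ t ih =>
      rcases eq_or_lt_of_le hst with h | h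
      · rw [h]
      · have h1 : n t ≤ n (t + 1) := by
          have hc := hcons t (by omega) (by omega)
          have := (bnds (t + 1) (by omega) htM).2
          omega
        exact le_trans (ih (by omega) (by omega)) h1
  have vanish : ∀ m, 1 ≤ m → m ≤ M → ∀ k, k < idx m ∨ n m < k → ζ m k = 0 := by
    intro m hm1 hmM k hk
    rcases eq_or_lt_of_le hm1 with h | h
    · subst h
      rcases hblk1 with hb | hb
      · rcases hb with ⟨hz, -, -⟩ | ⟨-, -, -, -, hv⟩
        · exact hz k
        · exact hv k hk
      · rw [hb.2]
        rcases hk with hk | hk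
        · have hk0 : k = 0 := by omega
          rw [hk0]
          exact h0 (n 1 + 1) (by have := hb.1; omega)
        · exact dzero hord hb.1 hk
    · rcases hblks m h hmM with ⟨hz, -, -⟩ | ⟨-, -, -, -, hv⟩
      · exact hz k
      · exact hv k hk
  have val : ∀ m, 1 ≤ m → m ≤ M → ∀ k, idx m ≤ k → k ≤ n m → μ k = ζ m k := by
    intro m hm1 hmM k hk1 hk2
    rw [hsum k]
    apply Finset.sum_eq_single_of_mem
    · simp only [Finset.mem_Icc]; omega
    · intro b hb hbm
      simp only [Finset.mem_Icc] at hb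
      rcases lt_or_gt_of_ne hbm with hlt | hlt
      · -- b < m : n b < idx m ≤ k
        apply vanish b hb.1 hb.2 k
        right
        have h1 : n b ≤ n (m - 1) := mono b (m - 1) hb.1 (by omega) (by omega)
        have h2 : idx m = n (m - 1) + 1 := by
          have := hcons (m - 1) (by omega) (by omega)
          have hm : m - 1 + 1 = m := by omega
          rwa [hm] at this
        omega
      · -- b > m : k ≤ n m < idx b
        apply vanish b hb.1 hb.2 k
        left
        have h1 : n m ≤ n (b - 1) := mono m (b - 1) hm1 (by omega) (by omega)
        have h2 : idx b = n (b - 1) + 1 := by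
          have := hcons (b - 1) (by omega) (by omega)
          have hb' : b - 1 + 1 = b := by omega
          rwa [hb'] at this
        omega
  have hzero : ∀ k, n M < k → μ k = 0 := by
    intro k hk
    rw [hsum k]
    apply Finset.sum_eq_zero
    intro b hb
    simp only [Finset.mem_Icc] at hb
    exact vanish b hb.1 hb.2 k (Or.inr (by have := mono b M hb.1 hb.2 le_rfl; omega))
  have hmu0 : μ 0 = 0 := by
    rw [hsum 0]
    apply Finset.sum_eq_zero
    intro b hb
    simp only [Finset.mem_Icc] at hb
    exact vanish b hb.1 hb.2 0 (Or.inl (by have := (bnds b hb.1 hb.2).1; omega))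
  -- blocks 2..M give a chain above n 1
  have blkm : ∀ m, 2 ≤ m → m ≤ M → Blk d μ (idx m) (n m) := by
    intro m hm2 hmM
    rcases hblks m hm2 hmM with ⟨hz, hin, h1n⟩ | ⟨h1, h2, h3, h4, -⟩
    · refine ⟨by omega, le_of_eq hin, ?_, ?_⟩
      · rw [val m (by omega) hmM (idx m) le_rfl (le_of_eq hin), hz]
        rw [hin]
        exact dpos hord h1n
      · intro j hj1 hj2
        rw [hin] at hj1
        omega
    · refine ⟨h1, h2, ?_, ?_⟩
      · rw [val m (by omega) hmM (idx m) le_rfl h2]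
        exact h3
      · intro j hj1 hj2
        rw [val m (by omega) hmM j (by omega) hj2]
        exact h4 j hj1 hj2
  have upchain : ∀ s, 1 ≤ s → s ≤ M → Chain d μ (n 1) (n s) := by
    intro s hs1 hsM
    induction s with
    | zero => omega
    | succ s ih =>
      rcases eq_or_lt_of_le hs1 with h | h
      · rw [← h]; exact Chain.nil
      · have hs1' : 1 ≤ s := by omega
        have hidxs : idx (s + 1) = n s + 1 := hcons s hs1' (by omega)
        refine Chain.cons (idx (s + 1)) (n (s + 1)) ?_ (blkm (s + 1) (by omega) hsM) ?_
        · have := mono 1 s le_rfl hs1' (by omega)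
          omega
        · have he : idx (s + 1) - 1 = n s := by omega
          rw [he]
          exact ih hs1' (by omega)
  rcases hblk1 with hb | hb
  · -- first block proper : full chain from 0
    have blk1 : Blk d μ 1 (n 1) := by
      rcases hb with ⟨hz, hin, h1n⟩ | ⟨hh1, hh2, hh3, hh4, -⟩
      · have hn1 : n 1 = 1 := by omega
        refine ⟨le_rfl, by omega, ?_, ?_⟩
        · rw [val 1 le_rfl hM1 1 (by omega) (by omega), hz 1, hn1]
          exact dpos hord le_rfl
        · intro j hj1 hj2
          omega
      · refine ⟨le_rfl, by omega, ?_, ?_⟩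
        · rw [val 1 le_rfl hM1 1 (by omega) (by omega)]
          rw [hidx1] at hh3
          exact hh3
        · intro j hj1 hj2
          rw [val 1 le_rfl hM1 j (by omega) hj2]
          rw [hidx1] at hh4
          exact hh4 j hj1 hj2
    refine ⟨hmu0, n M, hzero, Or.inl ?_⟩
    refine chain_concat (upchain M hM1 le_rfl) ?_
    refine Chain.cons 1 (n 1) ?_ blk1 Chain.nil
    have := (bnds 1 le_rfl hM1).2
    omega
  · -- first block maximal
    obtain ⟨h1n, hζ1⟩ := hb
    refine ⟨hmu0, n M, hzero, Or.inr ⟨n 1, mono 1 M le_rfl hM1 le_rfl, ⟨h1n, ?_⟩,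
      upchain M hM1 le_rfl⟩⟩
    intro j hj1 hj2
    rw [val 1 le_rfl hM1 j (by omega) hj2, hζ1]

end Equiv

end ZCP
namespace ZCP

open Finset

section Equiv2

variable {d : ℕ → ℕ → ℕ}
variable (h0 : ∀ n, 2 ≤ n → d n 0 = 0)
  (hord : ∀ n, 2 ≤ n → d n (n - 1) ≠ 0 ∧ ∀ k, n - 1 < k → d n k = 0)

lemma chain_to_strip {μ : ℕ → ℕ} {a p : ℕ} (h : Chain d μ a p) (t0 : ℕ) :
    ∃ (M : ℕ) (ζ : ℕ → ℕ → ℕ) (idx n : ℕ → ℕ),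
      (∀ m, t0 < m → m ≤ t0 + M → IsProperBlockAt d (ζ m) (idx m) (n m)) ∧
      (∀ m, t0 < m → m < t0 + M → idx (m + 1) = n m + 1) ∧
      (0 < M → idx (t0 + 1) = a + 1 ∧ n (t0 + M) = p) ∧
      (M = 0 → a = p) ∧
      (∀ k, (∑ m ∈ Finset.Icc (t0 + 1) (t0 + M), ζ m k) =
        if a < k ∧ k ≤ p then μ k else 0) := by
  induction h with
  | nil =>
    refine ⟨0, fun _ _ => 0, fun _ => 0, fun _ => 0, ?_, ?_, ?_, fun _ => rfl, ?_⟩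
    · intro m hm1 hm2; omega
    · intro m hm1 hm2; omega
    · intro h; omega
    · intro k
      rw [Finset.Icc_eq_empty (by omega), Finset.sum_empty, if_neg (by omega)]
  | cons i q hi hblk hch ih =>
    obtain ⟨M, ζ, idx, n, hb, hc, hbd, hM0, hs⟩ := ih
    obtain ⟨g1, g2, g3, g4⟩ := hblk
    refine ⟨M + 1,
      Function.update ζ (t0 + M + 1) (fun k => if i ≤ k ∧ k ≤ q then μ k else 0),
      Function.update idx (t0 + M + 1) i,
      Function.update n (t0 + M + 1) q, ?_, ?_, ?_, by omega, ?_⟩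
    · intro m hm1 hm2
      by_cases hm : m = t0 + M + 1
      · subst hm
        rw [Function.update_self, Function.update_self, Function.update_self]
        refine Or.inr ⟨g1, g2, ?_, ?_, ?_⟩
        · show (if i ≤ i ∧ i ≤ q then μ i else 0) < d (q + 1) i
          rw [if_pos ⟨le_rfl, g2⟩]; exact g3
        · intro j hj1 hj2
          show (if i ≤ j ∧ j ≤ q then μ j else 0) = d (q + 1) j
          rw [if_pos ⟨by omega, hj2⟩]
          exact g4 j hj1 hj2
        · intro s hs'
          show (if i ≤ s ∧ s ≤ q then μ s else 0) = 0
          rw [if_neg (by omega)]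
      · rw [Function.update_of_ne hm, Function.update_of_ne hm, Function.update_of_ne hm]
        exact hb m hm1 (by omega)
    · intro m hm1 hm2
      by_cases hm : m = t0 + M
      · subst hm
        have hM : 0 < M := by omega
        rw [Function.update_self, Function.update_of_ne (by omega : t0 + M ≠ t0 + M + 1)]
        rw [(hbd hM).2]
        omega
      · rw [Function.update_of_ne (by omega : m + 1 ≠ t0 + M + 1),
          Function.update_of_ne (by omega : m ≠ t0 + M + 1)]
        exact hc m hm1 (by omega)
    · intro _
      constructor
      · rcases Nat.eq_zero_or_pos M with hM | hM
        · subst hM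
          rw [show t0 + 1 = t0 + 0 + 1 by omega, Function.update_self]
          have := hM0 rfl
          omega
        · rw [Function.update_of_ne (by omega : t0 + 1 ≠ t0 + M + 1)]
          exact (hbd hM).1
      · rw [show t0 + (M + 1) = t0 + M + 1 by omega, Function.update_self]
    · intro k
      have hsplit : ∑ m ∈ Finset.Icc (t0 + 1) (t0 + (M + 1)),
          Function.update ζ (t0 + M + 1) (fun k => if i ≤ k ∧ k ≤ q then μ k else 0) m k
          = (∑ m ∈ Finset.Icc (t0 + 1) (t0 + M), ζ m k)
            + (if i ≤ k ∧ k ≤ q then μ k else 0) := by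
        rw [show t0 + (M + 1) = (t0 + M) + 1 by omega]
        rw [Finset.sum_Icc_succ_top (by omega : t0 + 1 ≤ t0 + M + 1)]
        rw [Function.update_self]
        congr 1
        apply Finset.sum_congr rfl
        intro x hx
        simp only [Finset.mem_Icc] at hx
        rw [Function.update_of_ne (by omega : x ≠ t0 + M + 1)]
      rw [hsplit, hs k]
      have hiq : i ≤ q := g2
      have hmono : ∀ j, i < j → j ≤ q → μ j = d (q + 1) j := g4
      by_cases hk1 : a < k ∧ k ≤ q
      · rw [if_pos hk1]
        by_cases hk2 : k < i
        · rw [if_pos (by omega : a < k ∧ k ≤ i - 1), if_neg (by omega)]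
          omega
        · rw [if_neg (by omega : ¬(a < k ∧ k ≤ i - 1)), if_pos (by omega : i ≤ k ∧ k ≤ q)]
          omega
      · rw [if_neg hk1, if_neg (by omega : ¬(a < k ∧ k ≤ i - 1)),
          if_neg (by omega : ¬(i ≤ k ∧ k ≤ q))]

include h0 hord in
lemma mem_to_det {μ : ℕ → ℕ} (h : Mem d μ) : μ ∈ DeterminedCollection d := by
  obtain ⟨hμ0, p, hzp, hstr⟩ := h
  rcases hstr with hch | ⟨m0, hm0p, ⟨hm01, hmax⟩, chm⟩
  · obtain ⟨M, ζ, idx, n, hb, hc, hbd, hM0, hs⟩ := chain_to_strip hch 0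
    rcases Nat.eq_zero_or_pos M with hM | hM
    · -- μ = 0
      subst hM
      have hp0 : (0:ℕ) = p := hM0 rfl
      have hz : ∀ k, μ k = 0 := by
        intro k
        rcases Nat.eq_zero_or_pos k with h | h
        · rw [h]; exact hμ0
        · exact hzp k (by omega)
      refine ⟨1, fun _ _ => 0, fun _ => 1, fun _ => 1, le_rfl, rfl, ?_, ?_, ?_, ?_⟩
      · exact Or.inl (Or.inl ⟨fun _ => rfl, rfl, le_rfl⟩)
      · intro m hm1 hm2
        exact Or.inl ⟨fun _ => rfl, rfl, le_rfl⟩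
      · intro m hm1 hm2; omega
      · intro k
        rw [hz k]
        simp
    · refine ⟨M, ζ, idx, n, hM, ?_, ?_, ?_, ?_, ?_⟩
      · have := (hbd hM).1
        simpa using this
      · exact Or.inl (by simpa using hb 1 (by omega) (by omega))
      · intro m hm1 hm2
        exact hb m (by omega) (by omega)
      · intro m hm1 hm2
        exact hc m (by omega) (by omega)
      · intro k
        rw [show Finset.Icc 1 M = Finset.Icc (0 + 1) (0 + M) by norm_num, hs k]
        by_cases hk : 0 < k ∧ k ≤ p
        · rw [if_pos hk]
        · rw [if_neg hk]
          rcases Nat.eq_zero_or_pos k with h | h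
          · rw [h]; exact hμ0
          · exact hzp k (by omega)
  · obtain ⟨M, ζ, idx, n, hb, hc, hbd, hM0, hs⟩ := chain_to_strip chm 1
    refine ⟨M + 1, Function.update ζ 1 (d (m0 + 1)), Function.update idx 1 1,
      Function.update n 1 m0, by omega, Function.update_self _ _ _, ?_, ?_, ?_, ?_⟩
    · refine Or.inr ⟨?_, Function.update_self _ _ _⟩
      rw [Function.update_self]
      exact hm01
    · intro m hm1 hm2
      rw [Function.update_of_ne (by omega : m ≠ 1), Function.update_of_ne (by omega : m ≠ 1),
        Function.update_of_ne (by omega : m ≠ 1)]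
      exact hb m (by omega) (by omega)
    · intro m hm1 hm2
      rcases eq_or_lt_of_le hm1 with h | h
      · rw [← h]
        rw [Function.update_of_ne (by omega : (2:ℕ) ≠ 1), Function.update_self]
        have hM : 0 < M := by omega
        have := (hbd hM).1
        simpa using this
      · rw [Function.update_of_ne (by omega : m + 1 ≠ 1), Function.update_of_ne (by omega : m ≠ 1)]
        exact hc m (by omega) (by omega)
    · intro k
      have h1mem : (1:ℕ) ∈ Finset.Icc 1 (M + 1) := by
        simp only [Finset.mem_Icc]; omega
      rw [← Finset.add_sum_erase _ _ h1mem, Function.update_self]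
      have herase : (Finset.Icc 1 (M + 1)).erase 1 = Finset.Icc 2 (M + 1) := by
        rw [Finset.Icc_erase_left]
        rw [← Finset.Icc_add_one_left_eq_Ioc]
        rfl
      rw [herase]
      have hrest : ∑ x ∈ Finset.Icc 2 (M + 1),
          Function.update ζ 1 (d (m0 + 1)) x k = ∑ x ∈ Finset.Icc (1 + 1) (1 + M), ζ x k := by
        rw [show Finset.Icc 2 (M+1) = Finset.Icc (1+1) (1+M) by congr 1; omega]
        apply Finset.sum_congr rfl
        intro x hx
        simp only [Finset.mem_Icc] at hx
        rw [Function.update_of_ne (by omega : x ≠ 1)]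
      rw [hrest, hs k]
      rcases Nat.eq_zero_or_pos k with hk0 | hk0
      · rw [hk0, hμ0, if_neg (by omega), h0 (m0 + 1) (by omega)]
      · by_cases hk1 : k ≤ m0
        · rw [if_neg (by omega), ← hmax k hk0 hk1]
          omega
        · by_cases hk2 : k ≤ p
          · rw [if_pos (by omega : m0 < k ∧ k ≤ p), dzero hord hm01 (by omega)]
            omega
          · rw [if_neg (by omega), dzero hord hm01 (by omega), hzp k (by omega)]

include h0 hord in
lemma mem_iff_det {μ : ℕ → ℕ} : μ ∈ DeterminedCollection d ↔ Mem d μ :=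
  ⟨det_to_mem h0 hord, mem_to_det h0 hord⟩

end Equiv2

end ZCP
namespace ZCP

open Finset

section Fin

variable {d : ℕ → ℕ → ℕ}
variable (h0 : ∀ n, 2 ≤ n → d n 0 = 0)
  (hord : ∀ n, 2 ≤ n → d n (n - 1) ≠ 0 ∧ ∀ k, n - 1 < k → d n k = 0)

/-- uniform bound on values of members supported below `T`. -/
def Dbd (d : ℕ → ℕ → ℕ) (T j : ℕ) : ℕ := (Finset.Icc 2 (T + 1)).sup (fun n => d n j)

include hord in
lemma chain_bound {σ : ℕ → ℕ} {a p T : ℕ} (h : Chain d σ a p)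
    (hz : ∀ j, T < j → σ j = 0) : ∀ j, a < j → j ≤ p → σ j ≤ Dbd d T j := by
  induction h with
  | nil => intro j h1 h2; omega
  | cons i q hi hblk hch ih =>
    intro j h1 h2
    obtain ⟨b1, b2, b3, b4⟩ := hblk
    by_cases hji : j < i
    · exact ih j h1 (by omega)
    · by_cases hqT : q ≤ T
      · have hmem : q + 1 ∈ Finset.Icc 2 (T + 1) := by
          simp only [Finset.mem_Icc]; omega
        have hsup : d (q + 1) j ≤ Dbd d T j := by
          unfold Dbd
          exact Finset.le_sup (f := fun n => d n j) hmem
        rcases eq_or_lt_of_le (show i ≤ j by omega) with h | h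
        · rw [← h] at hsup ⊢; omega
        · rw [b4 j h h2]; exact hsup
      · rcases eq_or_lt_of_le b2 with h | h
        · -- i = q, so j = q > T
          have : j = q := by omega
          rw [this, hz q (by omega)]
          omega
        · exfalso
          have h5 : σ q = d (q + 1) q := b4 q h le_rfl
          have h6 : σ q = 0 := hz q (by omega)
          have := dpos hord (show 1 ≤ q by omega)
          omega

include hord in
lemma mem_bound {σ : ℕ → ℕ} {T : ℕ} (hσ : Mem d σ) (hz : ∀ j, T < j → σ j = 0) :
    ∀ j, σ j ≤ Dbd d T j := by
  obtain ⟨hσ0, p, hzp, hstr⟩ := hσ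
  intro j
  rcases Nat.eq_zero_or_pos j with hj0 | hj0
  · rw [hj0, hσ0]; omega
  by_cases hjT : T < j
  · rw [hz j hjT]; omega
  rcases hstr with hch | ⟨m, hmp, ⟨hm1, hmax⟩, chm⟩
  · by_cases hjp : j ≤ p
    · exact chain_bound hord hch hz j hj0 hjp
    · rw [hzp j (by omega)]; omega
  · have hmT : m ≤ T := by
      by_contra hc
      have h1 : σ m = d (m + 1) m := hmax m hm1 le_rfl
      have h2 : σ m = 0 := hz m (by omega)
      have := dpos hord hm1
      omega
    by_cases hjm : j ≤ m
    · rw [hmax j hj0 hjm]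
      unfold Dbd
      exact Finset.le_sup (f := fun n => d n j) (by simp only [Finset.mem_Icc]; omega)
    · by_cases hjp : j ≤ p
      · exact chain_bound hord chm hz j (by omega) hjp
      · rw [hzp j (by omega)]; omega

include hord in
lemma mem_lt_finite {μ : ℕ → ℕ} (hμ : Mem d μ) :
    {σ | Mem d σ ∧ AscLt σ μ}.Finite := by
  obtain ⟨hμ0, T, hzT, -⟩ := hμ
  have hzero : ∀ σ ∈ {σ | Mem d σ ∧ AscLt σ μ}, ∀ j, T < j → σ j = 0 := by
    rintro σ ⟨hσm, k, hk, hab⟩ j hj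
    have hkT : k ≤ T := by
      by_contra hc
      have := hzT k (by omega)
      omega
    rw [hab j (by omega)]
    exact hzT j hj
  have hbd : ∀ σ ∈ {σ | Mem d σ ∧ AscLt σ μ}, ∀ j, σ j ≤ Dbd d T j := by
    intro σ hσ j
    exact mem_bound hord hσ.1 (hzero σ hσ) j
  set Φ : (ℕ → ℕ) → (Fin (T + 1) → ℕ) := fun σ i => σ i.val with hΦ
  apply Set.Finite.of_finite_image (f := Φ)
  · apply Set.Finite.subset
      (Set.Finite.pi (fun i : Fin (T + 1) => Set.finite_Iic (Dbd d T i.val)))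
    rintro y ⟨σ, hσ, rfl⟩
    intro i _
    exact hbd σ hσ i.val
  · intro σ hσ σ' hσ' he
    funext j
    by_cases hj : j ≤ T
    · exact congrFun he ⟨j, by omega⟩
    · rw [hzero σ hσ j (by omega), hzero σ' hσ' j (by omega)]

include h0 hord in
lemma pred_beta {n : ℕ} (hn : 2 ≤ n) :
    IsImmPred (DeterminedCollection d) (beta n) (d n) := by
  refine ⟨mem_to_det h0 hord (mem_dn h0 hord hn), ?_, ?_⟩
  · exact (asc_lt_beta_iff (by omega)).2 (fun j hj => (hord n hn).2 j (by omega))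
  · intro σ hσ hlt
    have hz := (asc_lt_beta_iff (show 1 ≤ n by omega)).1 hlt
    exact mem_below_dn h0 hord (det_to_mem h0 hord hσ) hn hz

include h0 hord in
lemma zeck_det : IsZeckendorf (DeterminedCollection d) := by
  refine ⟨⟨?_, mem_to_det h0 hord mem_zero, fun i hi => mem_to_det h0 hord (mem_beta hord hi)⟩,
    ?_, ?_⟩
  · intro ε hε
    exact ⟨mem_zero_at_zero (det_to_mem h0 hord hε), mem_finsupp (det_to_mem h0 hord hε)⟩
  · intro μ hμ
    apply Set.Finite.subset (mem_lt_finite hord (det_to_mem h0 hord hμ))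
    rintro σ ⟨h1, h2⟩
    exact ⟨det_to_mem h0 hord h1, h2⟩
  · intro μ hμ
    have hμm := det_to_mem h0 hord hμ
    obtain ⟨K, hK1, hKalt, hKmem, hKmin⟩ := succ_exists hord hμm
    refine ⟨cand μ K, ⟨mem_to_det h0 hord hKmem, asc_lt_cand μ K, ?_⟩, ?_⟩
    · intro σ hσ hlt
      exact hKmin σ (det_to_mem h0 hord hσ) hlt
    · rcases hKalt with h | ⟨h2, hagree⟩
      · left
        subst h
        funext k
        rcases Nat.eq_zero_or_pos k with hk | hk
        · rw [hk, cand_lt (by omega), beta_ne (by omega), hμm.1]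
        · show cand μ 1 k = beta 1 k + μ k
          unfold cand
          rw [if_pos (show 1 ≤ k by omega)]
      · exact Or.inr ⟨K, h2, d K, pred_beta h0 hord h2, hagree, rfl⟩

end Fin

end ZCP
namespace ZCP

open Finset

section Generic

variable {G : Set (ℕ → ℕ)}

lemma immsucc_unique {x y y' : ℕ → ℕ} (h : IsImmSucc G x y) (h' : IsImmSucc G x y') :
    y = y' := by
  rcases h.2.2 y' h'.1 h'.2.1 with he | hlt
  · exact he.symm
  · rcases h'.2.2 y h.1 h.2.1 with he | hlt'
    · exact he
    · exact (asc_asymm hlt hlt').elim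

lemma immpred_unique {x y y' : ℕ → ℕ} (h : IsImmPred G x y) (h' : IsImmPred G x y') :
    y = y' := by
  rcases h.2.2 y' h'.1 h'.2.1 with he | hlt
  · exact he.symm
  · rcases h'.2.2 y h.1 h.2.1 with he | hlt'
    · exact he
    · exact (asc_asymm hlt hlt').elim

lemma finset_max (F : Finset (ℕ → ℕ)) (hne : F.Nonempty) :
    (∀ σ ∈ F, FinSupp σ) → ∃ p ∈ F, ∀ z ∈ F, z = p ∨ AscLt z p := by
  induction hne using Finset.Nonempty.cons_induction with
  | singleton a =>
    intro _
    exact ⟨a, Finset.mem_singleton_self a, fun z hz => Or.inl (Finset.mem_singleton.1 hz)⟩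
  | cons a F ha hne ih =>
    intro hfs
    obtain ⟨p, hp, hmax⟩ := ih (fun σ hσ => hfs σ (Finset.mem_cons_of_mem hσ))
    have hfa : FinSupp a := hfs a (Finset.mem_cons_self a F)
    have hfp : FinSupp p := hfs p (Finset.mem_cons_of_mem hp)
    rcases asc_trichotomy hfa hfp with he | hlt | hlt
    · subst he
      exact absurd hp ha
    · refine ⟨p, Finset.mem_cons_of_mem hp, fun z hz => ?_⟩
      rcases Finset.mem_cons.1 hz with h | h
      · exact Or.inr (h ▸ hlt)
      · exact hmax z h
    · refine ⟨a, Finset.mem_cons_self a F, fun z hz => ?_⟩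
      rcases Finset.mem_cons.1 hz with h | h
      · exact Or.inl h
      · rcases hmax z h with he | hlt'
        · exact Or.inr (he ▸ hlt)
        · exact Or.inr (asc_trans hlt' hlt)

lemma set_max {S : Set (ℕ → ℕ)} (hfin : S.Finite) (hne : S.Nonempty)
    (hfs : ∀ σ ∈ S, FinSupp σ) : ∃ p ∈ S, ∀ z ∈ S, z = p ∨ AscLt z p := by
  obtain ⟨p, hp, hmax⟩ := finset_max hfin.toFinset
    (by rwa [Set.Finite.toFinset_nonempty]) (fun σ hσ => hfs σ (hfin.mem_toFinset.1 hσ))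
  exact ⟨p, hfin.mem_toFinset.1 hp, fun z hz => hmax z (hfin.mem_toFinset.2 hz)⟩

variable (hG : IsZeckendorf G)

include hG in
lemma zg_fs {x : ℕ → ℕ} (hx : x ∈ G) : FinSupp x := (hG.1.1 x hx).2

include hG in
lemma zg_z0 {x : ℕ → ℕ} (hx : x ∈ G) : x 0 = 0 := (hG.1.1 x hx).1

include hG in
lemma zg_succ {x : ℕ → ℕ} (hx : x ∈ G) : ∃ y, IsImmSucc G x y := by
  obtain ⟨ν, hν, -⟩ := hG.2.2 x hx
  exact ⟨ν, hν⟩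

include hG in
lemma zg_pred_max {x : ℕ → ℕ} (hx : x ∈ G) (hx0 : x ≠ 0) :
    ∃ p, (p ∈ G ∧ AscLt p x) ∧ ∀ z ∈ G, AscLt z x → z = p ∨ AscLt z p := by
  have hfin : {σ | σ ∈ G ∧ AscLt σ x}.Finite := hG.2.1 x hx
  have hne : {σ | σ ∈ G ∧ AscLt σ x}.Nonempty :=
    ⟨0, hG.1.2.1, asc_zero_lt (zg_fs hG hx) hx0⟩
  obtain ⟨p, hp, hmax⟩ := set_max hfin hne (fun σ hσ => zg_fs hG hσ.1)
  exact ⟨p, hp, fun z hzG hzx => hmax z ⟨hzG, hzx⟩⟩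

/-- the enumeration of a Zeckendorf collection. -/
noncomputable def nth (G : Set (ℕ → ℕ)) : ℕ → (ℕ → ℕ)
  | 0 => 0
  | k + 1 => Classical.epsilon (fun y => IsImmSucc G (nth G k) y)

@[simp] lemma nth_zero : nth G 0 = 0 := rfl

include hG in
lemma nth_mem : ∀ k, nth G k ∈ G := by
  intro k
  induction k with
  | zero => exact hG.1.2.1
  | succ k ih =>
    have h : ∃ y, IsImmSucc G (nth G k) y := zg_succ hG ih
    show Classical.epsilon (fun y => IsImmSucc G (nth G k) y) ∈ G
    exact (Classical.epsilon_spec h).1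

include hG in
lemma nth_imm (k : ℕ) : IsImmSucc G (nth G k) (nth G (k + 1)) := by
  have h : ∃ y, IsImmSucc G (nth G k) y := zg_succ hG (nth_mem hG k)
  show IsImmSucc G (nth G k) (Classical.epsilon (fun y => IsImmSucc G (nth G k) y))
  exact Classical.epsilon_spec h

include hG in
lemma nth_lt {k l : ℕ} (hkl : k < l) : AscLt (nth G k) (nth G l) := by
  induction l with
  | zero => omega
  | succ l ih =>
    rcases Nat.lt_succ_iff_lt_or_eq.1 hkl with h | h
    · exact asc_trans (ih h) (nth_imm hG l).2.1
    · rw [h]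
      exact (nth_imm hG l).2.1

include hG in
lemma nth_lt_iff {k l : ℕ} : AscLt (nth G k) (nth G l) ↔ k < l := by
  constructor
  · intro h
    rcases Nat.lt_trichotomy k l with hh | hh | hh
    · exact hh
    · subst hh
      exact (asc_irrefl h).elim
    · exact (asc_asymm h (nth_lt hG hh)).elim
  · exact nth_lt hG

include hG in
lemma nth_exhaust : ∀ x ∈ G, ∃ k, x = nth G k := by
  have main : ∀ c x, x ∈ G → {σ | σ ∈ G ∧ AscLt σ x}.ncard = c → ∃ k, x = nth G k := by
    intro c
    induction c using Nat.strong_induction_on with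
    | _ c ih =>
      intro x hx hcard
      by_cases hx0 : x = 0
      · exact ⟨0, hx0⟩
      · obtain ⟨p, ⟨hpG, hplt⟩, hpmax⟩ := zg_pred_max hG hx hx0
        have hsub : {σ | σ ∈ G ∧ AscLt σ p} ⊂ {σ | σ ∈ G ∧ AscLt σ x} := by
          constructor
          · rintro σ ⟨h1, h2⟩
            exact ⟨h1, asc_trans h2 hplt⟩
          · intro hc
            have : p ∈ {σ | σ ∈ G ∧ AscLt σ p} := hc ⟨hpG, hplt⟩
            exact asc_irrefl this.2
        have hlt : {σ | σ ∈ G ∧ AscLt σ p}.ncard < c :=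
          hcard ▸ Set.ncard_lt_ncard hsub (hG.2.1 x hx)
        obtain ⟨kp, hkp⟩ := ih _ hlt p hpG rfl
        have himm : IsImmSucc G p x := by
          refine ⟨hx, hplt, fun z hzG hzlt => ?_⟩
          rcases asc_trichotomy (zg_fs hG hzG) (zg_fs hG hx) with he | hlt' | hlt'
          · exact Or.inl he
          · rcases hpmax z hzG hlt' with he | hlt''
            · subst he
              exact (asc_irrefl hzlt).elim
            · exact (asc_asymm hzlt hlt'').elim
          · exact Or.inr hlt'
        rw [hkp] at himm
        exact ⟨kp + 1, immsucc_unique himm (nth_imm hG kp)⟩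
  exact fun x hx => main _ x hx rfl

include hG in
lemma bel_insert (k : ℕ) :
    {σ | σ ∈ G ∧ AscLt σ (nth G (k + 1))} = insert (nth G k) {σ | σ ∈ G ∧ AscLt σ (nth G k)} := by
  ext σ
  simp only [Set.mem_insert_iff, Set.mem_setOf_eq]
  constructor
  · rintro ⟨h1, h2⟩
    rcases asc_trichotomy (zg_fs hG h1) (zg_fs hG (nth_mem hG k)) with he | hlt | hlt
    · exact Or.inl he
    · exact Or.inr ⟨h1, hlt⟩
    · exfalso
      rcases (nth_imm hG k).2.2 σ h1 hlt with he | hlt'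
      · rw [he] at h2
        exact asc_irrefl h2
      · exact asc_asymm h2 hlt'
  · rintro (he | ⟨h1, h2⟩)
    · rw [he]
      exact ⟨nth_mem hG k, (nth_imm hG k).2.1⟩
    · exact ⟨h1, asc_trans h2 (nth_imm hG k).2.1⟩

include hG in
lemma bel_card : ∀ k, {σ | σ ∈ G ∧ AscLt σ (nth G k)}.ncard = k := by
  intro k
  induction k with
  | zero =>
    have : {σ | σ ∈ G ∧ AscLt σ (nth G 0)} = ∅ := by
      ext σ
      simp only [Set.mem_setOf_eq, Set.mem_empty_iff_false, iff_false]
      rintro ⟨-, h⟩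
      exact asc_not_lt_zero h
    rw [this, Set.ncard_empty]
  | succ k ih =>
    rw [bel_insert hG k, Set.ncard_insert_of_notMem
      (fun hc => asc_irrefl hc.2) (hG.2.1 (nth G k) (nth_mem hG k)), ih]

include hG in
lemma nth_position {x : ℕ → ℕ} (hx : x ∈ G) :
    x = nth G ({σ | σ ∈ G ∧ AscLt σ x}.ncard) := by
  obtain ⟨k, hk⟩ := nth_exhaust hG x hx
  rw [hk, bel_card hG k]

include hG in
lemma nth_pred (k : ℕ) : IsImmPred G (nth G (k + 1)) (nth G k) := by
  refine ⟨nth_mem hG k, (nth_imm hG k).2.1, fun z hzG hzlt => ?_⟩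
  obtain ⟨j, hj⟩ := nth_exhaust hG z hzG
  subst hj
  have hjk : j < k + 1 := (nth_lt_iff hG).1 hzlt
  rcases Nat.lt_succ_iff_lt_or_eq.1 hjk with h | h
  · exact Or.inr (nth_lt hG h)
  · exact Or.inl (by rw [h])

end Generic

end ZCP
namespace ZCP

open Finset

section Values

variable {d : ℕ → ℕ → ℕ}
variable (h0 : ∀ n, 2 ≤ n → d n 0 = 0)
  (hord : ∀ n, 2 ≤ n → d n (n - 1) ≠ 0 ∧ ∀ k, n - 1 < k → d n k = 0)

lemma beta_finsupp (m : ℕ) : FinSupp (beta m) := by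
  apply Set.Finite.subset (Set.finite_singleton m)
  intro x hx
  simp only [Function.mem_support] at hx
  by_contra h
  exact hx (beta_ne (by simpa using h))

include hord in
lemma dn_finsupp {n : ℕ} (hn : 2 ≤ n) : FinSupp (d n) := by
  apply Set.Finite.subset (Set.finite_Icc 0 (n - 1))
  intro x hx
  simp only [Function.mem_support] at hx
  simp only [Set.mem_Icc]
  constructor
  · omega
  · by_contra h
    exact hx ((hord n hn).2 x (by omega))

lemma cand_finsupp {x : ℕ → ℕ} (hx : FinSupp x) (q : ℕ) : FinSupp (cand x q) := by
  apply Set.Finite.subset (Set.Finite.insert q hx)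
  intro k hk
  simp only [Function.mem_support] at hk
  simp only [Set.mem_insert_iff, Function.mem_support]
  rcases Nat.lt_trichotomy k q with h | h | h
  · exact absurd (cand_lt h) hk
  · exact Or.inl h
  · rw [cand_gt h] at hk
    exact Or.inr hk

/-- count of members below `beta m`. -/
noncomputable def cE (d : ℕ → ℕ → ℕ) (m : ℕ) : ℕ :=
  {σ | σ ∈ DeterminedCollection d ∧ AscLt σ (beta m)}.ncard

open Classical in
/-- a support bound for a coefficient function. -/
noncomputable def bnd (σ : ℕ → ℕ) : ℕ :=
  if h : ∃ B, ∀ j, B < j → σ j = 0 then h.choose else 0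

lemma bnd_spec {σ : ℕ → ℕ} (h : FinSupp σ) : ∀ j, bnd σ < j → σ j = 0 := by
  have he : ∃ B, ∀ j, B < j → σ j = 0 := finsupp_bdd h
  unfold bnd
  rw [dif_pos he]
  exact he.choose_spec

/-- the value of a coefficient function. -/
noncomputable def vv (d : ℕ → ℕ → ℕ) (σ : ℕ → ℕ) : ℕ :=
  ∑ j ∈ Finset.Icc 1 (bnd σ), σ j * cE d j

lemma vv_eq {σ : ℕ → ℕ} {B : ℕ} (hfs : FinSupp σ) (hB : ∀ j, B < j → σ j = 0) :
    vv d σ = ∑ j ∈ Finset.Icc 1 B, σ j * cE d j := by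
  have key : ∀ C, bnd σ ≤ C → B ≤ C →
      (∑ j ∈ Finset.Icc 1 B, σ j * cE d j) = ∑ j ∈ Finset.Icc 1 C, σ j * cE d j := by
    intro C h1 h2
    apply Finset.sum_subset
    · intro x hx
      simp only [Finset.mem_Icc] at hx ⊢
      omega
    · intro x hx hnx
      simp only [Finset.mem_Icc] at hx hnx
      rw [hB x (by omega)]
      ring
  have key2 : ∀ C, bnd σ ≤ C → B ≤ C →
      (∑ j ∈ Finset.Icc 1 (bnd σ), σ j * cE d j) = ∑ j ∈ Finset.Icc 1 C, σ j * cE d j := by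
    intro C h1 h2
    apply Finset.sum_subset
    · intro x hx
      simp only [Finset.mem_Icc] at hx ⊢
      omega
    · intro x hx hnx
      simp only [Finset.mem_Icc] at hx hnx
      rw [bnd_spec hfs x (by omega)]
      ring
  unfold vv
  rw [key2 (max (bnd σ) B) (le_max_left _ _) (le_max_right _ _),
    key (max (bnd σ) B) (le_max_left _ _) (le_max_right _ _)]

lemma vv_zero : vv d 0 = 0 := by
  unfold vv
  apply Finset.sum_eq_zero
  intro x _
  simp

lemma vv_beta {m : ℕ} (hm : 1 ≤ m) : vv d (beta m) = cE d m := by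
  rw [vv_eq (beta_finsupp m) (B := m) (fun j hj => beta_ne (by omega))]
  rw [Finset.sum_eq_single_of_mem m (by simp only [Finset.mem_Icc]; omega)]
  · rw [beta_self, one_mul]
  · intro b _ hb
    rw [beta_ne hb, zero_mul]

/-- the key counting identity for the bump. -/
lemma vv_cand {x : ℕ → ℕ} {q : ℕ} (hfs : FinSupp x) (hq : 1 ≤ q) :
    vv d (cand x q) + ∑ j ∈ Finset.Ico 1 q, x j * cE d j = vv d x + cE d q := by
  set B := max (bnd x) q with hB
  have hxz : ∀ j, B < j → x j = 0 := fun j hj => bnd_spec hfs j (by omega)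
  have hcz : ∀ j, B < j → cand x q j = 0 := by
    intro j hj
    rw [cand_gt (by omega)]
    exact hxz j hj
  rw [vv_eq (cand_finsupp hfs q) hcz, vv_eq hfs hxz]
  have e1 : ∀ j, cand x q j * cE d j
      = (if j = q then cE d j else 0) + (if q ≤ j then x j * cE d j else 0) := by
    intro j
    rcases Nat.lt_trichotomy j q with h | h | h
    · rw [cand_lt h, if_neg (by omega), if_neg (by omega), zero_mul, add_zero]
    · subst h
      rw [cand_self, if_pos rfl, if_pos le_rfl, Nat.succ_mul, Nat.add_comm]
    · rw [cand_gt h, if_neg (by omega), if_pos (by omega), zero_add]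
  have e2 : (∑ j ∈ Finset.Icc 1 B, cand x q j * cE d j)
      = cE d q + ∑ j ∈ (Finset.Icc 1 B).filter (fun j => q ≤ j), x j * cE d j := by
    calc (∑ j ∈ Finset.Icc 1 B, cand x q j * cE d j)
        = ∑ j ∈ Finset.Icc 1 B,
            ((if j = q then cE d j else 0) + (if q ≤ j then x j * cE d j else 0)) :=
          Finset.sum_congr rfl (fun j _ => e1 j)
      _ = (∑ j ∈ Finset.Icc 1 B, if j = q then cE d j else 0)
          + ∑ j ∈ Finset.Icc 1 B, (if q ≤ j then x j * cE d j else 0) :=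
          Finset.sum_add_distrib
      _ = cE d q + ∑ j ∈ (Finset.Icc 1 B).filter (fun j => q ≤ j), x j * cE d j := by
          congr 1
          · rw [Finset.sum_ite_eq' (Finset.Icc 1 B) q (fun j => cE d j)]
            rw [if_pos (by simp only [Finset.mem_Icc]; omega)]
          · rw [Finset.sum_filter]
  have e3 : (∑ j ∈ Finset.Icc 1 B, x j * cE d j)
      = (∑ j ∈ (Finset.Icc 1 B).filter (fun j => q ≤ j), x j * cE d j)
        + ∑ j ∈ Finset.Ico 1 q, x j * cE d j := by
    rw [← Finset.sum_filter_add_sum_filter_not (Finset.Icc 1 B) (fun j => q ≤ j)]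
    congr 1
    apply Finset.sum_congr
    · ext j
      simp only [Finset.mem_filter, Finset.mem_Icc, Finset.mem_Ico]
      omega
    · intro j _
      rfl
  rw [e2, e3]
  omega

end Values

end ZCP
namespace ZCP

open Finset

section Final

variable {d : ℕ → ℕ → ℕ}
variable (h0 : ∀ n, 2 ≤ n → d n 0 = 0)
  (hord : ∀ n, 2 ≤ n → d n (n - 1) ≠ 0 ∧ ∀ k, n - 1 < k → d n k = 0)

lemma nth_inj {G : Set (ℕ → ℕ)} (hG : IsZeckendorf G) {a b : ℕ}
    (h : nth G a = nth G b) : a = b := by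
  rcases Nat.lt_trichotomy a b with hh | hh | hh
  · have := nth_lt hG hh
    rw [h] at this
    exact (asc_irrefl this).elim
  · exact hh
  · have := nth_lt hG hh
    rw [h] at this
    exact (asc_irrefl this).elim

include h0 hord in
lemma beta_mem_det {m : ℕ} (hm : 1 ≤ m) : beta m ∈ DeterminedCollection d :=
  mem_to_det h0 hord (mem_beta hord hm)

include h0 hord in
lemma cE_pos {m : ℕ} (hm : 1 ≤ m) : 1 ≤ cE d m := by
  have hE := zeck_det h0 hord
  have hzlt : AscLt 0 (beta m) := by
    refine ⟨m, ?_, fun j hj => ?_⟩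
    · show (0 : ℕ → ℕ) m < beta m m
      rw [beta_self]
      norm_num
    · show (0 : ℕ → ℕ) j = beta m j
      rw [beta_ne (by omega)]
      rfl
  have hne : {σ | σ ∈ DeterminedCollection d ∧ AscLt σ (beta m)}.Nonempty :=
    ⟨0, mem_to_det h0 hord mem_zero, hzlt⟩
  have hfin := hE.2.1 (beta m) (beta_mem_det h0 hord hm)
  exact (Set.ncard_pos hfin).2 hne

include h0 hord in
lemma beta_nth {m : ℕ} (hm : 1 ≤ m) :
    nth (DeterminedCollection d) (cE d m) = beta m := by
  have hE := zeck_det h0 hord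
  have := nth_position hE (beta_mem_det h0 hord hm)
  exact this.symm

include h0 hord in
lemma dn_nth {n : ℕ} (hn : 2 ≤ n) :
    nth (DeterminedCollection d) (cE d n - 1) = d n := by
  have hE := zeck_det h0 hord
  have h1 : cE d n - 1 + 1 = cE d n := by
    have := cE_pos h0 hord (show 1 ≤ n by omega)
    omega
  have hpred := nth_pred hE (cE d n - 1)
  rw [h1, beta_nth h0 hord (show 1 ≤ n by omega)] at hpred
  exact immpred_unique hpred (pred_beta h0 hord hn)

include h0 hord in
lemma cE_one : cE d 1 = 1 := by
  unfold cE
  have hset : {σ | σ ∈ DeterminedCollection d ∧ AscLt σ (beta 1)} = {0} := by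
    ext σ
    simp only [Set.mem_setOf_eq, Set.mem_singleton_iff]
    constructor
    · rintro ⟨h1, h2⟩
      have hz := (asc_lt_beta_iff le_rfl).1 h2
      have h00 := mem_zero_at_zero (det_to_mem h0 hord h1)
      funext j
      rcases Nat.eq_zero_or_pos j with h | h
      · rw [h, h00]; rfl
      · rw [hz j (by omega)]; rfl
    · rintro rfl
      refine ⟨mem_to_det h0 hord mem_zero, (asc_lt_beta_iff le_rfl).2 (fun j _ => rfl)⟩
  rw [hset, Set.ncard_singleton]

include h0 hord in
lemma vv_step {x : ℕ → ℕ} {q : ℕ} (hfs : FinSupp x) (hq1 : 1 ≤ q)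
    (hqalt : q = 1 ∨ (2 ≤ q ∧ ∀ j, 1 ≤ j → j < q → x j = d q j))
    (hVdq : 2 ≤ q → vv d (d q) = cE d q - 1) :
    vv d (cand x q) = vv d x + 1 := by
  have hkey := vv_cand (d := d) hfs hq1
  rcases hqalt with h | ⟨h2, hagree⟩
  · subst h
    rw [Finset.Ico_self, Finset.sum_empty, cE_one h0 hord] at hkey
    omega
  · have hT : (∑ j ∈ Finset.Ico 1 q, x j * cE d j)
        = ∑ j ∈ Finset.Ico 1 q, d q j * cE d j := by
      apply Finset.sum_congr rfl
      intro j hj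
      simp only [Finset.mem_Ico] at hj
      rw [hagree j hj.1 hj.2]
    have hicc : Finset.Icc 1 (q - 1) = Finset.Ico 1 q := by
      rw [← Finset.Ico_add_one_right_eq_Icc]
      congr 1
      omega
    have hT2 : vv d (d q) = ∑ j ∈ Finset.Ico 1 q, d q j * cE d j := by
      rw [vv_eq (dn_finsupp hord h2) (B := q - 1) (fun j hj => (hord q h2).2 j (by omega)), hicc]
    have hc := cE_pos h0 hord (show 1 ≤ q by omega)
    have hv := hVdq h2
    omega

include h0 hord in
lemma vv_nth_E : ∀ k, vv d (nth (DeterminedCollection d) k) = k := by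
  have hE := zeck_det h0 hord
  intro k
  induction k using Nat.strong_induction_on with
  | _ k ih =>
    match k with
    | 0 => simpa using vv_zero (d := d)
    | Nat.succ k =>
      have hx : nth (DeterminedCollection d) k ∈ DeterminedCollection d := nth_mem hE k
      have hxm : Mem d (nth (DeterminedCollection d) k) := det_to_mem h0 hord hx
      obtain ⟨K, hK1, hKalt, hKmem, hKmin⟩ := succ_exists hord hxm
      have himm : IsImmSucc (DeterminedCollection d) (nth (DeterminedCollection d) k)
          (cand (nth (DeterminedCollection d) k) K) :=
        ⟨mem_to_det h0 hord hKmem, asc_lt_cand _ _,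
          fun σ hσ hlt => hKmin σ (det_to_mem h0 hord hσ) hlt⟩
      have heq : nth (DeterminedCollection d) (k + 1)
          = cand (nth (DeterminedCollection d) k) K := immsucc_unique (nth_imm hE k) himm
      have hVdq : 2 ≤ K → vv d (d K) = cE d K - 1 := by
        intro h2
        have hagree := (hKalt.resolve_left (by omega)).2
        have hdn : d K = nth (DeterminedCollection d) (cE d K - 1) := (dn_nth h0 hord h2).symm
        have hle : cE d K - 1 ≤ k := by
          rcases asc_trichotomy (dn_finsupp hord h2) (zg_fs hE hx) with he | hlt | hlt
          · rw [hdn] at he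
            have := nth_inj hE he
            omega
          · rw [hdn] at hlt
            have := (nth_lt_iff hE).1 hlt
            omega
          · exfalso
            obtain ⟨t, htt, hab⟩ := hlt
            have htK : t ≤ K - 1 := by
              by_contra hc
              rw [(hord K h2).2 t (by omega)] at htt
              omega
            rcases Nat.eq_zero_or_pos t with h | h
            · rw [h, h0 K h2] at htt
              omega
            · rw [hagree t h (by omega)] at htt
              omega
        have hv := ih (cE d K - 1) (by omega)
        rw [← hdn] at hv
        exact hv
      rw [heq, vv_step h0 hord (zg_fs hE hx) hK1 hKalt hVdq, ih k (by omega)]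

include h0 hord in
lemma vv_dq {q : ℕ} (h2 : 2 ≤ q) : vv d (d q) = cE d q - 1 := by
  have := vv_nth_E h0 hord (cE d q - 1)
  rw [dn_nth h0 hord h2] at this
  exact this

section Funiq

variable {F : Set (ℕ → ℕ)} (hF : IsZeckendorf F)
  (hFpred : ∀ n, 2 ≤ n → IsImmPred F (beta n) (d n))

include hF hFpred in
lemma succ_form {x : ℕ → ℕ} (hx : x ∈ F) :
    ∃ q, 1 ≤ q ∧ (q = 1 ∨ (2 ≤ q ∧ ∀ j, 1 ≤ j → j < q → x j = d q j)) ∧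
      IsImmSucc F x (cand x q) := by
  obtain ⟨ν, hν, hform⟩ := hF.2.2 x hx
  rcases hform with h | ⟨n, hn2, δ, hδ, hagree, hform⟩
  · refine ⟨1, le_rfl, Or.inl rfl, ?_⟩
    have he : cand x 1 = ν := by
      subst h
      funext k
      rcases Nat.eq_zero_or_pos k with hk | hk
      · rw [hk, cand_lt (by omega)]
        show (0:ℕ) = beta 1 0 + x 0
        rw [beta_ne (by omega), zg_z0 hF hx]
      · show cand x 1 k = beta 1 k + x k
        unfold cand
        rw [if_pos (show 1 ≤ k by omega)]
    rw [he]
    exact hν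
  · have hδd : δ = d n := immpred_unique hδ (hFpred n hn2)
    refine ⟨n, by omega, Or.inr ⟨hn2, fun j h1 h2 => by rw [← hδd]; exact hagree j h1 h2⟩, ?_⟩
    have he : cand x n = ν := hform.symm
    rw [he]
    exact hν

include h0 hord hF hFpred in
lemma F_subset : F ⊆ DeterminedCollection d := by
  intro x hxF
  by_contra hxE
  have hxM : ¬ Mem d x := fun h => hxE (mem_to_det h0 hord h)
  have key : ∀ c y, y ∈ F → {σ | σ ∈ F ∧ AscLt σ y}.ncard = c →
      (y = x ∨ AscLt x y) → ¬ Mem d y := by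
    intro c
    induction c using Nat.strong_induction_on with
    | _ c ih =>
      intro y hyF hcard hge
      rcases hge with rfl | hlt
      · exact hxM
      · have hy0 : y ≠ 0 := by
          rintro rfl
          exact asc_not_lt_zero hlt
        obtain ⟨p, ⟨hpF, hplt⟩, hpmax⟩ := zg_pred_max hF hyF hy0
        have hxp : x = p ∨ AscLt x p := hpmax x hxF hlt
        have hsub : {σ | σ ∈ F ∧ AscLt σ p} ⊂ {σ | σ ∈ F ∧ AscLt σ y} := by
          constructor
          · rintro σ ⟨hh1, hh2⟩
            exact ⟨hh1, asc_trans hh2 hplt⟩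
          · intro hc
            have : p ∈ {σ | σ ∈ F ∧ AscLt σ p} := hc ⟨hpF, hplt⟩
            exact asc_irrefl this.2
        have hc : {σ | σ ∈ F ∧ AscLt σ p}.ncard < c :=
          hcard ▸ Set.ncard_lt_ncard hsub (hF.2.1 y hyF)
        have hxp' : p = x ∨ AscLt x p := by
          rcases hxp with h | h
          · exact Or.inl h.symm
          · exact Or.inr h
        have hp_not : ¬ Mem d p := ih _ hc p hpF rfl hxp'
        have himm : IsImmSucc F p y := by
          refine ⟨hyF, hplt, fun z hzG hzlt => ?_⟩
          rcases asc_trichotomy (zg_fs hF hzG) (zg_fs hF hyF) with he | hlt' | hlt'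
          · exact Or.inl he
          · rcases hpmax z hzG hlt' with he | hlt''
            · subst he
              exact (asc_irrefl hzlt).elim
            · exact (asc_asymm hzlt hlt'').elim
          · exact Or.inr hlt'
        obtain ⟨q, hq1, hqalt, himm'⟩ := succ_form hF hFpred hpF
        have hy : y = cand p q := immsucc_unique himm himm'
        intro hMem
        apply hp_not
        refine mem_of_cand_mem (zg_z0 hF hpF) hq1 ?_ (hy ▸ hMem)
        rcases hqalt with h | ⟨h2, ha⟩
        · intro j h1 h2
          omega
        · exact ha
  have hfs := zg_fs hF hxF
  have hdm : d (bnd x + 2) ∈ F := (hFpred (bnd x + 2) (by omega)).1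
  have hlt : AscLt x (d (bnd x + 2)) := by
    refine ⟨bnd x + 1, ?_, fun j hj => ?_⟩
    · rw [bnd_spec hfs (bnd x + 1) (by omega)]
      have h1 := (hord (bnd x + 2) (by omega)).1
      have h2 : bnd x + 2 - 1 = bnd x + 1 := by omega
      rw [h2] at h1
      omega
    · rw [bnd_spec hfs j (by omega), (hord (bnd x + 2) (by omega)).2 j (by omega)]
  exact key _ (d (bnd x + 2)) hdm rfl (Or.inr hlt) (mem_dn h0 hord (by omega))

include h0 hord hF hFpred in
lemma vv_nth_F : ∀ k, vv d (nth F k) = k := by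
  intro k
  induction k with
  | zero => simpa using vv_zero (d := d)
  | succ k ih =>
    have hx := nth_mem hF k
    obtain ⟨q, hq1, hqalt, himm⟩ := succ_form hF hFpred hx
    have heq : nth F (k + 1) = cand (nth F k) q := immsucc_unique (nth_imm hF k) himm
    rw [heq, vv_step h0 hord (zg_fs hF hx) hq1 hqalt (fun h2 => vv_dq h0 hord h2), ih]

include h0 hord hF hFpred in
lemma F_eq : F = DeterminedCollection d := by
  have hE := zeck_det h0 hord
  apply Set.Subset.antisymm (F_subset h0 hord hF hFpred)
  intro σ hσ
  have hbm : ∀ m, 1 ≤ m → nth F (cE d m) = beta m := by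
    intro m hm
    have hb : beta m ∈ F := hF.1.2.2 m hm
    obtain ⟨t, ht⟩ := nth_exhaust hF (beta m) hb
    have h1 := vv_nth_F h0 hord hF hFpred t
    rw [← ht, vv_beta hm] at h1
    rw [h1]
    exact ht.symm
  have hm1 : 1 ≤ bnd σ + 1 := by omega
  have hσβ : AscLt σ (beta (bnd σ + 1)) :=
    (asc_lt_beta_iff hm1).2
      (fun j hj => bnd_spec (mem_finsupp (det_to_mem h0 hord hσ)) j (by omega))
  have hFcard : {z | z ∈ F ∧ AscLt z (beta (bnd σ + 1))}.ncard = cE d (bnd σ + 1) := by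
    have := bel_card hF (cE d (bnd σ + 1))
    rw [hbm (bnd σ + 1) hm1] at this
    exact this
  have hsets : {z | z ∈ F ∧ AscLt z (beta (bnd σ + 1))}
      = {z | z ∈ DeterminedCollection d ∧ AscLt z (beta (bnd σ + 1))} := by
    apply Set.eq_of_subset_of_ncard_le
    · rintro z ⟨h1, h2⟩
      exact ⟨F_subset h0 hord hF hFpred h1, h2⟩
    · rw [hFcard]
      exact le_of_eq rfl
    · exact hE.2.1 (beta (bnd σ + 1)) (beta_mem_det h0 hord hm1)
  have hmem : σ ∈ {z | z ∈ DeterminedCollection d ∧ AscLt z (beta (bnd σ + 1))} :=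
    ⟨hσ, hσβ⟩
  rw [← hsets] at hmem
  exact hmem.1

end Funiq

end Final

end ZCP

/-- The collection determined by a family `d n` (of finite-support coefficient
functions with order `n - 1`, for `n ≥ 2`) is the unique Zeckendorf collection
for positive integers whose immediate predecessor of `β^n` is `d n`. -/
theorem determined_collection_zeckendorf (d : ℕ → ℕ → ℕ)
    (h0 : ∀ n, 2 ≤ n → d n 0 = 0)
    (hord : ∀ n, 2 ≤ n → d n (n - 1) ≠ 0 ∧ ∀ k, n - 1 < k → d n k = 0) :
    IsZeckendorf (DeterminedCollection d) ∧
    (∀ n, 2 ≤ n → IsImmPred (DeterminedCollection d) (beta n) (d n)) ∧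
    ∀ F : Set (ℕ → ℕ), IsZeckendorf F → (∀ n, 2 ≤ n → IsImmPred F (beta n) (d n)) →
      F = DeterminedCollection d :=
  ⟨ZCP.zeck_det h0 hord, fun n hn => ZCP.pred_beta h0 hord hn,
    fun _F hF hFpred => ZCP.F_eq h0 hord hF hFpred⟩
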